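/- arXiv:2603.11302 — 8 statements merged into one kernel-verified Lean document; each statement's English description precedes it below -/
import Mathlib

section
/- Let S ⊆ ℝⁿ be a nonempty closed set and x̄ ∈ S. Then the Clarke tangent cone admits the characterization T^C_S(x̄) = {v ∈ ℝⁿ : lim_{t↓0, x→x̄, x∈S} d_S(x+tv)/t = 0}, i.e. v belongs to T^C_S(x̄) if and only if for every sequence (x_i) ⊆ S converging to x̄ and every sequence t_i ↓ 0 one has d_S(x_i + t_i v)/t_i → 0. -/
open Metric Set Filter

noncomputable section

abbrev Euc (n : ℕ) := EuclideanSpace ℝ (Fin n)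

/-- The Clarke tangent cone to `S` at `xbar`:
`{v : limsup_{t↓0, x→xbar} (d_S(x+tv) − d_S(x))/t = 0}`. -/
def clarkeTangentCone {n : ℕ} (S : Set (Euc n)) (xbar : Euc n) : Set (Euc n) :=
  {v | Filter.limsup
      (fun q : ℝ × Euc n =>
        (Metric.infDist (q.2 + q.1 • v) S - Metric.infDist q.2 S) / q.1)
      ((nhdsWithin (0 : ℝ) (Set.Ioi 0)) ×ˢ (nhds xbar)) = 0}

/-- Lemma 2.1: for a nonempty closed `S ⊆ ℝⁿ` and `xbar ∈ S`,
`v ∈ T^C_S(xbar)` iff for every sequence `x_i ∈ S` converging to `xbar` and every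
sequence `t_i ↓ 0`, one has `d_S(x_i + t_i v)/t_i → 0`. -/
theorem stmt0 {n : ℕ} (S : Set (Euc n)) (hne : S.Nonempty) (hcl : IsClosed S)
    (xbar : Euc n) (hxbar : xbar ∈ S) (v : Euc n) :
    v ∈ clarkeTangentCone S xbar ↔
      ∀ (x : ℕ → Euc n) (t : ℕ → ℝ),
        (∀ i, x i ∈ S) → Filter.Tendsto x Filter.atTop (nhds xbar) →
        (∀ i, 0 < t i) → Filter.Tendsto t Filter.atTop (nhds 0) →
        Filter.Tendsto (fun i => Metric.infDist (x i + t i • v) S / t i)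
          Filter.atTop (nhds 0) := by
  classical
  set F : Filter (ℝ × Euc n) := (nhdsWithin (0 : ℝ) (Set.Ioi 0)) ×ˢ (nhds xbar) with hF
  set f : ℝ × Euc n → ℝ := fun q =>
    (Metric.infDist (q.2 + q.1 • v) S - Metric.infDist q.2 S) / q.1 with hfdef
  haveI hFne : F.NeBot := by
    rw [hF]; exact Filter.prod_neBot.2 ⟨inferInstance, inferInstance⟩
  haveI hFcg : F.IsCountablyGenerated := by
    rw [hF]
    exact Filter.prod.isCountablyGenerated (nhdsWithin (0 : ℝ) (Set.Ioi 0)) (nhds xbar)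
  have hpos : ∀ᶠ q : ℝ × Euc n in F, 0 < q.1 :=
    Filter.Eventually.prod_inl (eventually_mem_nhdsWithin) (nhds xbar)
  have habs : ∀ q : ℝ × Euc n, 0 < q.1 → |f q| ≤ ‖v‖ := by
    intro q hq
    have h1 : Metric.infDist (q.2 + q.1 • v) S - Metric.infDist q.2 S ≤ q.1 * ‖v‖ := by
      have h := Metric.infDist_le_infDist_add_dist (x := q.2 + q.1 • v) (y := q.2) (s := S)
      have hd : dist (q.2 + q.1 • v) q.2 = q.1 * ‖v‖ := by
        rw [dist_eq_norm]; simp [norm_smul, abs_of_pos hq]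
      linarith
    have h2 : -(q.1 * ‖v‖) ≤ Metric.infDist (q.2 + q.1 • v) S - Metric.infDist q.2 S := by
      have h := Metric.infDist_le_infDist_add_dist (x := q.2) (y := q.2 + q.1 • v) (s := S)
      have hd : dist q.2 (q.2 + q.1 • v) = q.1 * ‖v‖ := by
        rw [dist_eq_norm]; simp [norm_smul, abs_of_pos hq]
      linarith
    rw [hfdef]
    simp only
    rw [abs_div, abs_of_pos hq, div_le_iff₀ hq]
    calc |Metric.infDist (q.2 + q.1 • v) S - Metric.infDist q.2 S| ≤ q.1 * ‖v‖ :=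
          abs_le.2 ⟨h2, h1⟩
      _ = ‖v‖ * q.1 := by ring
  have hbound : ∀ᶠ q in F, |f q| ≤ ‖v‖ := hpos.mono fun q hq => habs q hq
  have hbdd : Filter.IsBoundedUnder (· ≤ ·) F f :=
    ⟨‖v‖, eventually_map.2 (hbound.mono fun q hq => (abs_le.1 hq).2)⟩
  have hbdd' : Filter.IsBoundedUnder (· ≥ ·) F f :=
    ⟨-‖v‖, eventually_map.2 (hbound.mono fun q hq => (abs_le.1 hq).1)⟩
  constructor
  · -- forward direction
    intro hv x t hxS hx ht0 ht
    have hlimsup : Filter.limsup f F = 0 := hv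
    rw [NormedAddCommGroup.tendsto_nhds_zero]
    intro ε hε
    have hlt : ∀ᶠ q in F, f q < ε :=
      Filter.eventually_lt_of_limsup_lt (by rw [hlimsup]; exact hε) hbdd
    have hu : Filter.Tendsto (fun i => (t i, x i)) Filter.atTop F := by
      rw [hF]
      exact Filter.Tendsto.prodMk
        (tendsto_nhdsWithin_iff.mpr ⟨ht, Filter.Eventually.of_forall ht0⟩) hx
    filter_upwards [hu.eventually hlt] with i hi
    have hzx : Metric.infDist (x i) S = 0 := Metric.infDist_zero_of_mem (hxS i)
    have hfi : f (t i, x i) = Metric.infDist (x i + t i • v) S / t i := by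
      simp [hfdef, hzx]
    have hnn : 0 ≤ Metric.infDist (x i + t i • v) S / t i :=
      div_nonneg Metric.infDist_nonneg (ht0 i).le
    rw [Real.norm_of_nonneg hnn]
    rw [hfi] at hi
    exact hi
  · -- reverse direction
    intro h
    have key : ∀ ε > (0:ℝ), ∀ᶠ q in F, f q ≤ ε := by
      intro ε hε
      by_contra hc
      have hfreq : ∃ᶠ q in F, ε < f q := by
        simpa [Filter.not_eventually, not_le] using hc
      have hfreq' : ∃ᶠ q in F, ε < f q ∧ 0 < q.1 := hfreq.and_eventually hpos
      obtain ⟨u, huF, hu⟩ := Filter.exists_seq_forall_of_frequently hfreq'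
      set t : ℕ → ℝ := fun i => (u i).1 with htdef
      set y : ℕ → Euc n := fun i => (u i).2 with hydef
      have huF' : Filter.Tendsto u Filter.atTop
          ((nhdsWithin (0 : ℝ) (Set.Ioi 0)) ×ˢ (nhds xbar)) := by rwa [hF] at huF
      have htF : Filter.Tendsto t Filter.atTop (nhdsWithin (0:ℝ) (Set.Ioi 0)) :=
        (Filter.tendsto_fst).comp huF'
      have ht : Filter.Tendsto t Filter.atTop (nhds 0) := htF.mono_right nhdsWithin_le_nhds
      have hy : Filter.Tendsto y Filter.atTop (nhds xbar) := (Filter.tendsto_snd).comp huF'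
      choose x hxS hxdist using fun i => hcl.exists_infDist_eq_dist hne (y i)
      have hx : Filter.Tendsto x Filter.atTop (nhds xbar) := by
        rw [tendsto_iff_dist_tendsto_zero]
        have hlim : Filter.Tendsto (fun i => 2 * dist (y i) xbar) Filter.atTop (nhds 0) := by
          have h2 := (tendsto_iff_dist_tendsto_zero.1 hy).const_mul (2:ℝ)
          simpa using h2
        refine squeeze_zero (fun i => dist_nonneg) (fun i => ?_) hlim
        calc dist (x i) xbar ≤ dist (x i) (y i) + dist (y i) xbar := dist_triangle _ _ _
          _ = Metric.infDist (y i) S + dist (y i) xbar := by rw [dist_comm, ← hxdist i]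
          _ ≤ dist (y i) xbar + dist (y i) xbar :=
              add_le_add_left (Metric.infDist_le_dist_of_mem hxbar) _
          _ = 2 * dist (y i) xbar := by ring
      have htend := h x t hxS hx (fun i => (hu i).2) ht
      have hle : ∀ i, f (u i) ≤ Metric.infDist (x i + t i • v) S / t i := by
        intro i
        have hti : 0 < t i := (hu i).2
        have h1 : Metric.infDist (y i + t i • v) S ≤
            Metric.infDist (x i + t i • v) S + dist (y i) (x i) := by
          have h := Metric.infDist_le_infDist_add_dist
            (x := y i + t i • v) (y := x i + t i • v) (s := S)
          simpa [dist_add_right] using h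
        have h2 : Metric.infDist (y i) S = dist (y i) (x i) := hxdist i
        have hnum : Metric.infDist (y i + t i • v) S - Metric.infDist (y i) S ≤
            Metric.infDist (x i + t i • v) S := by linarith
        have hfe : f (u i) =
            (Metric.infDist (y i + t i • v) S - Metric.infDist (y i) S) / t i := rfl
        rw [hfe]
        gcongr
      have hev : ∀ᶠ i in Filter.atTop, Metric.infDist (x i + t i • v) S / t i < ε :=
        htend.eventually (gt_mem_nhds hε)
      obtain ⟨i, hi⟩ := hev.exists
      have h3 := (hu i).1
      have h4 := hle i
      linarith
    have hle0 : Filter.limsup f F ≤ 0 := by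
      refine le_of_forall_pos_le_add fun ε hε => ?_
      rw [zero_add]
      exact Filter.limsup_le_of_le hbdd'.isCoboundedUnder_le (key ε hε)
    have hge0 : 0 ≤ Filter.limsup f F := by
      refine Filter.le_limsup_of_frequently_le ?_ hbdd
      have htend0 : Filter.Tendsto (fun s : ℝ => (s, xbar)) (nhdsWithin (0:ℝ) (Set.Ioi 0)) F := by
        rw [hF]; exact Filter.Tendsto.prodMk Filter.tendsto_id tendsto_const_nhds
      refine htend0.frequently ?_
      refine (eventually_mem_nhdsWithin.mono fun s hs => ?_).frequently
      have hs' : (0:ℝ) < s := hs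
      have hfe : f (s, xbar) = Metric.infDist (xbar + s • v) S / s := by
        simp [hfdef, Metric.infDist_zero_of_mem hxbar]
      rw [hfe]
      exact div_nonneg Metric.infDist_nonneg hs'.le
    show Filter.limsup f F = 0
    exact le_antisymm hle0 hge0
end
end

section
/- Two convex cones K₁, K₂ ⊆ ℝⁿ are transversal if and only if either they are strongly transversal or they are complementary linear subspaces, namely K₁ + K₂ = ℝⁿ and K₁ ∩ K₂ = {0} with K₁, K₂ linear subspaces. -/
open Set

noncomputable section

/-- `K` is a cone: `α • k ∈ K` for every `α ≥ 0` and `k ∈ K`. -/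
def IsCone {n : ℕ} (K : Set (Euc n)) : Prop :=
  ∀ a : ℝ, 0 ≤ a → ∀ k ∈ K, a • k ∈ K

/-- `K₁` and `K₂` are transversal: `K₁ − K₂ = ℝⁿ`. -/
def Transversal {n : ℕ} (K₁ K₂ : Set (Euc n)) : Prop :=
  {x | ∃ k₁ ∈ K₁, ∃ k₂ ∈ K₂, x = k₁ - k₂} = Set.univ

/-- `K₁` and `K₂` are strongly transversal: transversal and `K₁ ∩ K₂ ⊋ {0}`. -/
def StronglyTransversal {n : ℕ} (K₁ K₂ : Set (Euc n)) : Prop :=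
  Transversal K₁ K₂ ∧ {(0 : Euc n)} ⊂ K₁ ∩ K₂

lemma cone_add {n : ℕ} {K : Set (Euc n)} (h : Convex ℝ K) (hc : IsCone K)
    {x y : Euc n} (hx : x ∈ K) (hy : y ∈ K) : x + y ∈ K := by
  have hm := h hx hy (by norm_num : (0:ℝ) ≤ 1/2) (by norm_num : (0:ℝ) ≤ 1/2) (by norm_num)
  have h2 := hc 2 (by norm_num) _ hm
  have : (2:ℝ) • ((1/2:ℝ) • x + (1/2:ℝ) • y) = x + y := by
    rw [smul_add, smul_smul, smul_smul]; norm_num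
  rwa [this] at h2

def coneSubmodule {n : ℕ} (K : Set (Euc n)) (hconv : Convex ℝ K) (hc : IsCone K)
    (h0 : (0:Euc n) ∈ K) (hneg : ∀ x ∈ K, -x ∈ K) : Submodule ℝ (Euc n) where
  carrier := K
  add_mem' := fun hx hy => cone_add hconv hc hx hy
  zero_mem' := h0
  smul_mem' := by
    intro c x hx
    rcases le_or_gt 0 c with h | h
    · exact hc c h x hx
    · have := hc (-c) (by linarith) _ (hneg x hx)
      simpa [neg_smul, smul_neg] using this

/-- Proposition 2.1: two convex cones are transversal iff they are
strongly transversal or they are complementary linear subspaces. -/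
theorem stmt1 {n : ℕ} (K₁ K₂ : Set (Euc n))
    (h₁ : Convex ℝ K₁) (h₂ : Convex ℝ K₂) (hc₁ : IsCone K₁) (hc₂ : IsCone K₂) :
    Transversal K₁ K₂ ↔
      StronglyTransversal K₁ K₂ ∨
      ((∃ W₁ : Submodule ℝ (Euc n), K₁ = ↑W₁) ∧ (∃ W₂ : Submodule ℝ (Euc n), K₂ = ↑W₂) ∧
        {x | ∃ k₁ ∈ K₁, ∃ k₂ ∈ K₂, x = k₁ + k₂} = Set.univ ∧ K₁ ∩ K₂ = {0}) := by
  constructor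
  · intro ht
    have h0mem : ∀ x : Euc n, ∃ k₁ ∈ K₁, ∃ k₂ ∈ K₂, x = k₁ - k₂ :=
      fun x => Set.eq_univ_iff_forall.mp ht x
    obtain ⟨a0, ha0, b0, hb0, _⟩ := h0mem 0
    have h01 : (0:Euc n) ∈ K₁ := by simpa using hc₁ 0 le_rfl a0 ha0
    have h02 : (0:Euc n) ∈ K₂ := by simpa using hc₂ 0 le_rfl b0 hb0
    by_cases hcap : K₁ ∩ K₂ = {0}
    · right
      have hneg₁ : ∀ x ∈ K₁, -x ∈ K₁ := by
        intro x hx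
        obtain ⟨a, ha, b, hb, hab⟩ := h0mem (-x)
        have hax : a + x ∈ K₁ := cone_add h₁ hc₁ ha hx
        have hbax : b = a + x := by
          have h' : a - b = -x := hab.symm
          have h'' : a = -x + b := sub_eq_iff_eq_add.mp h'
          rw [h'']; abel
        have hbmem : b ∈ K₁ ∩ K₂ := ⟨hbax ▸ hax, hb⟩
        rw [hcap] at hbmem
        have hb0 : b = 0 := hbmem
        have hax0 : a + x = 0 := by rw [hb0] at hbax; exact hbax.symm
        have : a = -x := eq_neg_of_add_eq_zero_left hax0
        exact this ▸ ha
      have hneg₂ : ∀ x ∈ K₂, -x ∈ K₂ := by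
        intro x hx
        obtain ⟨a, ha, b, hb, hab⟩ := h0mem x
        have hxb : x + b ∈ K₂ := cone_add h₂ hc₂ hx hb
        have haxb : a = x + b := by rw [hab]; abel
        have hamem : a ∈ K₁ ∩ K₂ := ⟨ha, haxb ▸ hxb⟩
        rw [hcap] at hamem
        have ha0 : a = (0 : Euc n) := hamem
        have : -x = b := by
          rw [ha0] at hab
          rw [hab]; abel
        exact this ▸ hb
      refine ⟨⟨coneSubmodule K₁ h₁ hc₁ h01 hneg₁, rfl⟩,
        ⟨coneSubmodule K₂ h₂ hc₂ h02 hneg₂, rfl⟩, ?_, hcap⟩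
      rw [Set.eq_univ_iff_forall]
      intro x
      obtain ⟨a, ha, b, hb, hab⟩ := h0mem x
      exact ⟨a, ha, -b, hneg₂ b hb, by rw [hab]; abel⟩
    · left
      refine ⟨ht, ?_⟩
      exact (Set.singleton_subset_iff.mpr (Set.mem_inter h01 h02)).ssubset_of_ne
        (fun h => hcap h.symm)
  · rintro (⟨ht, _⟩ | ⟨⟨W₁, hW₁⟩, ⟨W₂, hW₂⟩, hsum, _⟩)
    · exact ht
    · rw [Transversal, Set.eq_univ_iff_forall]
      intro x
      obtain ⟨a, ha, b, hb, hab⟩ := Set.eq_univ_iff_forall.mp hsum x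
      refine ⟨a, ha, -b, ?_, by rw [hab]; abel⟩
      rw [hW₂] at hb ⊢
      exact neg_mem hb
end
end

section
/- Let S ⊆ ℝⁿ be a nonempty closed set and r > 0. Then S is r-prox-regular if and only if for all x, x' ∈ S and every η ∈ N^P_S(x) one has η·(x' − x) ≤ (1/(2r))|η||x' − x|². -/
open Metric Set
open scoped RealInnerProductSpace

noncomputable section

/-- The metric projection `Π_S(x) = {y ∈ S : |x − y| = d_S(x)}`. -/
def projSet {n : ℕ} (S : Set (Euc n)) (x : Euc n) : Set (Euc n) :=
  {y ∈ S | dist x y = Metric.infDist x S}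

/-- The proximal normal cone `N^P_S(xbar) = {η : ∃ σ > 0, xbar ∈ Π_S(xbar + σ η)}`. -/
def proxNormalCone {n : ℕ} (S : Set (Euc n)) (xbar : Euc n) : Set (Euc n) :=
  {η | ∃ σ > (0 : ℝ), xbar ∈ projSet S (xbar + σ • η)}

/-- `S` is `r`-prox-regular: for every `xbar ∈ S`, every unit `η ∈ N^P_S(xbar)` and every
`s ∈ (0, r]`, one has `xbar ∈ Π_S(xbar + s η)`. -/
def IsProxRegular {n : ℕ} (r : ℝ) (S : Set (Euc n)) : Prop :=
  ∀ xbar ∈ S, ∀ η ∈ proxNormalCone S xbar, ‖η‖ = 1 →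
    ∀ s : ℝ, 0 < s → s ≤ r → xbar ∈ projSet S (xbar + s • η)

lemma sq_dist_aux {n : ℕ} (x x' η : Euc n) (s : ℝ) :
    ‖x + s • η - x'‖ ^ 2 = s ^ 2 * ‖η‖ ^ 2 - 2 * s * ⟪η, x' - x⟫ + ‖x' - x‖ ^ 2 := by
  have h : x + s • η - x' = s • η - (x' - x) := by abel
  rw [h, norm_sub_sq_real, real_inner_smul_left, norm_smul]
  simp [mul_pow, sq_abs]
  ring

/-- Membership in the projection set, characterized by distances. -/
lemma mem_projSet_iff {n : ℕ} (S : Set (Euc n)) (hne : S.Nonempty) (x y : Euc n) :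
    y ∈ projSet S x ↔ y ∈ S ∧ ∀ x' ∈ S, dist x y ≤ dist x x' := by
  constructor
  · rintro ⟨hy, hd⟩
    exact ⟨hy, fun x' hx' => hd ▸ infDist_le_dist_of_mem hx'⟩
  · rintro ⟨hy, hd⟩
    refine ⟨hy, le_antisymm ?_ (infDist_le_dist_of_mem hy)⟩
    by_contra hlt
    obtain ⟨y, hy, hlt'⟩ := (infDist_lt_iff hne).1 (lt_of_not_ge hlt)
    exact (hd y hy).not_gt hlt'

/-- Proposition 2.3 (i)⇔(ii): `S` is `r`-prox-regular iff
`⟪η, x' − x⟫ ≤ (1/(2r)) |η| |x' − x|²` for all `x, x' ∈ S` and `η ∈ N^P_S(x)`. -/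
theorem stmt5 {n : ℕ} (S : Set (Euc n)) (hne : S.Nonempty) (hcl : IsClosed S)
    (r : ℝ) (hr : 0 < r) :
    IsProxRegular r S ↔
      ∀ x ∈ S, ∀ x' ∈ S, ∀ η ∈ proxNormalCone S x,
        ⟪η, x' - x⟫ ≤ (1 / (2 * r)) * ‖η‖ * ‖x' - x‖ ^ 2 := by
  constructor
  · intro hpr x hx x' hx' η hη
    rcases eq_or_ne η 0 with rfl | hη0
    · simp
    · set c : ℝ := ‖η‖ with hc
      have hcpos : 0 < c := norm_pos_iff.2 hη0
      set ηh : Euc n := c⁻¹ • η with hηh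
      have hηhn : ‖ηh‖ = 1 := by
        rw [hηh, norm_smul, norm_inv, norm_norm, inv_mul_cancel₀ hcpos.ne']
      have hηhc : ηh ∈ proxNormalCone S x := by
        obtain ⟨σ, hσ, hmem⟩ := hη
        refine ⟨σ * c, by positivity, ?_⟩
        have : (σ * c) • ηh = σ • η := by
          rw [hηh, smul_smul, mul_assoc, mul_inv_cancel₀ hcpos.ne', mul_one]
        rwa [this]
      have hp := hpr x hx ηh hηhc hηhn r hr le_rfl
      rw [mem_projSet_iff S hne] at hp
      have hle := hp.2 x' hx'
      have hdx : dist (x + r • ηh) x = r := by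
        rw [dist_eq_norm]
        have : x + r • ηh - x = r • ηh := by abel
        rw [this, norm_smul, hηhn, mul_one, Real.norm_eq_abs, abs_of_pos hr]
      rw [hdx, dist_eq_norm] at hle
      have hsq : r ^ 2 ≤ ‖x + r • ηh - x'‖ ^ 2 := by
        have := norm_nonneg (x + r • ηh - x')
        nlinarith
      rw [sq_dist_aux, hηhn] at hsq
      have hkey : ⟪ηh, x' - x⟫ ≤ (1 / (2 * r)) * ‖x' - x‖ ^ 2 := by
        rw [div_mul_eq_mul_div, one_mul, le_div_iff₀ (by positivity)]
        nlinarith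
      have hinner : ⟪η, x' - x⟫ = c * ⟪ηh, x' - x⟫ := by
        rw [hηh, real_inner_smul_left]
        field_simp
      rw [hinner]
      calc c * ⟪ηh, x' - x⟫ ≤ c * ((1 / (2 * r)) * ‖x' - x‖ ^ 2) := by
            exact mul_le_mul_of_nonneg_left hkey hcpos.le
        _ = (1 / (2 * r)) * ‖η‖ * ‖x' - x‖ ^ 2 := by rw [hc]; ring
  · intro h x hx η hηc hηn s hs hsr
    rw [mem_projSet_iff S hne]
    refine ⟨hx, fun x' hx' => ?_⟩
    have hdx : dist (x + s • η) x = s := by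
      rw [dist_eq_norm]
      have : x + s • η - x = s • η := by abel
      rw [this, norm_smul, hηn, mul_one, Real.norm_eq_abs, abs_of_pos hs]
    rw [hdx, dist_eq_norm]
    have hineq := h x hx x' hx' η hηc
    rw [hηn] at hineq
    have hsq : s ^ 2 ≤ ‖x + s • η - x'‖ ^ 2 := by
      rw [sq_dist_aux, hηn]
      have h1 : ⟪η, x' - x⟫ ≤ (1 / (2 * r)) * ‖x' - x‖ ^ 2 := by linarith [hineq]
      have h2 : 2 * s * ⟪η, x' - x⟫ ≤ (s / r) * ‖x' - x‖ ^ 2 := by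
        have := mul_le_mul_of_nonneg_left h1 (by positivity : (0:ℝ) ≤ 2 * s)
        calc 2 * s * ⟪η, x' - x⟫ ≤ 2 * s * ((1 / (2 * r)) * ‖x' - x‖ ^ 2) := this
          _ = (s / r) * ‖x' - x‖ ^ 2 := by field_simp
      have h3 : (s / r) * ‖x' - x‖ ^ 2 ≤ 1 * ‖x' - x‖ ^ 2 := by
        apply mul_le_mul_of_nonneg_right _ (by positivity)
        rw [div_le_one hr]; exact hsr
      nlinarith
    have := norm_nonneg (x + s • η - x')
    nlinarith
end
end

section
/- Let S ⊆ ℝⁿ be a nonempty closed set and r > 0. Then S is r-prox-regular if and only if on the set U_r := {x ∈ ℝⁿ : d_S(x) < r} the metric projection Π_S is single-valued; moreover, if S is r-prox-regular then for every s ∈ (0, r) one has |Π_S(x) − Π_S(y)| ≤ (1/(1 − s/r))|x − y| for all x, y ∈ U_s := {x : d_S(x) < s}, so Π_S is Lipschitz continuous on each U_s with s < r. -/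
open Metric Set

noncomputable section

open RealInnerProductSpace

lemma le_infDist' {E : Type*} [MetricSpace E] {s : Set E} (hn : s.Nonempty) (x : E) (b : ℝ)
    (h : ∀ y ∈ s, b ≤ dist x y) : b ≤ infDist x s := by
  by_contra hc
  push_neg at hc
  obtain ⟨y, hy, hd⟩ := (infDist_lt_iff hn).1 hc
  exact absurd (h y hy) (by linarith)

variable {n : ℕ} {S : Set (Euc n)}

lemma exists_proj (hcl : IsClosed S) (hne : S.Nonempty) (x : Euc n) : ∃ y, y ∈ projSet S x := by
  obtain ⟨y, hy, hd⟩ := hcl.exists_infDist_eq_dist hne x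
  exact ⟨y, hy, hd.symm⟩

lemma dist_ray {a v : Euc n} (hv : ‖v‖ = 1) {t : ℝ} (ht : 0 ≤ t) :
    dist (a + t • v) a = t := by
  rw [dist_eq_norm, add_sub_cancel_left, norm_smul, hv, Real.norm_eq_abs,
    abs_of_nonneg ht, mul_one]

/-- From `t ≤ dist (a + t•v) z` with `t > 0` extract the quadratic inequality. -/
lemma proj_ray_quad {a v z : Euc n} (hv : ‖v‖ = 1) {t : ℝ} (ht : 0 < t)
    (h : t ≤ dist (a + t • v) z) : 2 * t * ⟪v, z - a⟫ ≤ ‖z - a‖ ^ 2 := by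
  have hd : dist (a + t • v) z = ‖(a - z) + t • v‖ := by
    rw [dist_eq_norm]; congr 1; abel
  have hsq : t ^ 2 ≤ ‖(a - z) + t • v‖ ^ 2 := by
    rw [← hd]
    have := dist_nonneg (x := a + t • v) (y := z)
    nlinarith
  have hexp : ‖(a - z) + t • v‖ ^ 2
      = ‖a - z‖ ^ 2 + 2 * (t * ⟪a - z, v⟫) + t ^ 2 := by
    rw [norm_add_sq_real, real_inner_smul_right, norm_smul, hv, Real.norm_eq_abs,
      abs_of_pos ht]
    ring
  have h1 : ⟪a - z, v⟫ = - ⟪v, z - a⟫ := by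
    rw [real_inner_comm]
    rw [show a - z = -(z - a) by abel, inner_neg_right]
  have h2 : ‖a - z‖ = ‖z - a‖ := norm_sub_rev a z
  rw [hexp, h1, h2] at hsq
  nlinarith

/-- Converse: the quadratic inequality gives the distance bound. -/
lemma quad_to_ray {a v z : Euc n} (hv : ‖v‖ = 1) {t : ℝ} (ht : 0 ≤ t)
    (h : 2 * t * ⟪v, z - a⟫ ≤ ‖z - a‖ ^ 2) : t ≤ dist (a + t • v) z := by
  have hd : dist (a + t • v) z = ‖(a - z) + t • v‖ := by
    rw [dist_eq_norm]; congr 1; abel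
  have hexp : ‖(a - z) + t • v‖ ^ 2
      = ‖a - z‖ ^ 2 + 2 * (t * ⟪a - z, v⟫) + t ^ 2 := by
    rw [norm_add_sq_real, real_inner_smul_right, norm_smul, hv, Real.norm_eq_abs,
      abs_of_nonneg ht]
    ring
  have h1 : ⟪a - z, v⟫ = - ⟪v, z - a⟫ := by
    rw [real_inner_comm]
    rw [show a - z = -(z - a) by abel, inner_neg_right]
  have h2 : ‖a - z‖ = ‖z - a‖ := norm_sub_rev a z
  have hsq : t ^ 2 ≤ ‖(a - z) + t • v‖ ^ 2 := by
    rw [hexp, h1, h2]; nlinarith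
  rw [hd]
  nlinarith [norm_nonneg ((a - z) + t • v)]

set_option maxHeartbeats 1000000 in
lemma mem_proj_ray_iff (hne : S.Nonempty) {a v : Euc n} (ha : a ∈ S) (hv : ‖v‖ = 1)
    {t : ℝ} (ht : 0 ≤ t) :
    a ∈ projSet S (a + t • v) ↔ ∀ z ∈ S, t ≤ dist (a + t • v) z := by
  have hda : dist (a + t • v) a = t := dist_ray hv ht
  constructor
  · rintro ⟨-, hd⟩ z hz
    rw [hda] at hd
    exact le_trans (le_of_eq hd) (infDist_le_dist_of_mem hz)
  · intro h
    refine ⟨ha, ?_⟩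
    rw [hda]
    have h1 : infDist (a + t • v) S ≤ t := by
      have := infDist_le_dist_of_mem (x := a + t • v) ha
      rwa [hda] at this
    exact le_antisymm (le_infDist' hne _ _ h) h1

/-- Dini-type monotonicity lemma. -/
lemma dini_mono {f : ℝ → ℝ} {A B : ℝ} (hAB : A ≤ B) (hc : ContinuousOn f (Icc A B))
    (H : ∀ t ∈ Ico A B, ∀ c > (0:ℝ), ∃ h₀ > (0:ℝ), ∀ h : ℝ, 0 < h → h ≤ h₀ → t + h ≤ B →
      f t - c * h ≤ f (t + h)) :
    f A ≤ f B := by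
  rcases eq_or_lt_of_le hAB with rfl | hlt
  · exact le_refl _
  have key : ∀ c > (0:ℝ), f A - c * (B - A) ≤ f B := by
    intro c hc0
    set T := Icc A B ∩ (fun t => f t - f A + c * (t - A)) ⁻¹' Ici 0 with hTdef
    have hAT : A ∈ T := by
      constructor
      · exact ⟨le_refl _, hAB⟩
      · simp [Set.mem_preimage]
    have hTc : IsClosed T := by
      apply ContinuousOn.preimage_isClosed_of_isClosed _ isClosed_Icc isClosed_Ici
      exact (hc.sub continuousOn_const).add (continuousOn_const.mul
        ((continuousOn_id.sub continuousOn_const)))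
    have hbdd : T ⊆ Icc A B := inter_subset_left
    have hcpt : IsCompact T := isCompact_Icc.of_isClosed_subset hTc hbdd
    have hTne : T.Nonempty := ⟨A, hAT⟩
    have ht₀ : sSup T ∈ T := hcpt.sSup_mem hTne
    set t₀ := sSup T with ht₀def
    have ht₀mem : f A - c * (t₀ - A) ≤ f t₀ := by
      have h2 := ht₀.2
      simp only [Set.mem_preimage, Set.mem_Ici] at h2
      linarith
    by_cases hB : t₀ = B
    · rw [hB] at ht₀mem; linarith
    · exfalso
      have ht₀B : t₀ < B := lt_of_le_of_ne ht₀.1.2 hB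
      obtain ⟨h₀, hh₀, hstep⟩ := H t₀ ⟨ht₀.1.1, ht₀B⟩ c hc0
      have hmin : 0 < min h₀ (B - t₀) := lt_min hh₀ (by linarith)
      have hmem : t₀ + min h₀ (B - t₀) ∈ T := by
        refine ⟨⟨by linarith [ht₀.1.1], by
          have := min_le_right h₀ (B - t₀); linarith⟩, ?_⟩
        have hs := hstep (min h₀ (B - t₀)) hmin (min_le_left _ _)
          (by have := min_le_right h₀ (B - t₀); linarith)
        simp only [Set.mem_preimage, Set.mem_Ici]
        have := min_le_right h₀ (B - t₀)
        nlinarith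
      have := le_csSup hcpt.bddAbove hmem
      linarith
  by_contra hcon
  push_neg at hcon
  have hc0 : 0 < (f A - f B) / (2 * (B - A)) := by
    apply div_pos (by linarith) (by linarith)
  have h2 := key _ hc0
  have h3 : (f A - f B) / (2 * (B - A)) * (B - A) = (f A - f B) / 2 := by
    rw [← div_div, div_mul_cancel₀ _ (by linarith : B - A ≠ 0)]
  rw [h3] at h2
  linarith

/-- Continuity of the projection at a point where it is unique. -/
lemma proj_cont (hcl : IsClosed S) (hne : S.Nonempty) {x p : Euc n} (hp : p ∈ projSet S x)
    (hup : ∀ q ∈ projSet S x, q = p) {ε : ℝ} (hε : 0 < ε) :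
    ∃ h₀ > (0:ℝ), ∀ y q : Euc n, dist y x ≤ h₀ → q ∈ projSet S y → dist q p ≤ ε := by
  set d := infDist x S with hd
  have hbound : ∀ (h₀ : ℝ), 0 < h₀ → ∀ y q : Euc n, dist y x ≤ h₀ → q ∈ projSet S y →
      dist x q ≤ d + 2 * h₀ := by
    intro h₀ hh₀ y q hy hq
    have h1 : dist x q ≤ dist x y + dist y q := dist_triangle x y q
    have h2 : dist y q = infDist y S := hq.2
    have h3 : infDist y S ≤ infDist x S + dist y x := infDist_le_infDist_add_dist
    rw [dist_comm x y] at h1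
    linarith
  set C := (S ∩ {z | ε ≤ dist z p}) ∩ closedBall x (d + 1) with hC
  by_cases hCne : C.Nonempty
  · have hCc : IsClosed C := by
      apply IsClosed.inter _ isClosed_closedBall
      exact hcl.inter (isClosed_le continuous_const (continuous_id.dist continuous_const))
    have hCcpt : IsCompact C := (isCompact_closedBall x (d+1)).of_isClosed_subset hCc
      inter_subset_right
    obtain ⟨z₀, hz₀C, hz₀min⟩ := hCcpt.exists_isMinOn (f := fun z => dist x z) hCne
      (Continuous.continuousOn (continuous_const.dist continuous_id))
    have hz₀S : z₀ ∈ S := hz₀C.1.1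
    have hz₀d : d < dist x z₀ := by
      rcases lt_or_eq_of_le (infDist_le_dist_of_mem (x := x) hz₀S) with h | h
      · exact h
      · exfalso
        have : z₀ ∈ projSet S x := ⟨hz₀S, h.symm⟩
        have hz₀p := hup z₀ this
        have := hz₀C.1.2
        simp only [Set.mem_setOf_eq, hz₀p, dist_self] at this
        linarith
    refine ⟨min ((dist x z₀ - d)/3) (1/2), lt_min (by linarith) (by norm_num), ?_⟩
    intro y q hy hq
    by_contra hcon
    push_neg at hcon
    have hxq := hbound _ (lt_min (by linarith) (by norm_num)) y q hy hq
    have hmin1 : min ((dist x z₀ - d)/3) (1/2) ≤ (dist x z₀ - d)/3 := min_le_left _ _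
    have hmin2 : min ((dist x z₀ - d)/3) (1/2) ≤ 1/2 := min_le_right _ _
    have hqC : q ∈ C := by
      refine ⟨⟨hq.1, le_of_lt hcon⟩, ?_⟩
      simp only [mem_closedBall]
      rw [dist_comm q x]
      linarith
    have hfin : dist x z₀ ≤ dist x q := hz₀min hqC
    linarith
  · refine ⟨1/2, by norm_num, ?_⟩
    intro y q hy hq
    by_contra hcon
    push_neg at hcon
    apply hCne
    refine ⟨q, ⟨hq.1, le_of_lt hcon⟩, ?_⟩
    have := hbound (1/2) (by norm_num) y q hy hq
    simp only [mem_closedBall]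
    rw [dist_comm q x]
    linarith

set_option maxHeartbeats 1600000 in
/-- Key extension lemma: if the projection is single-valued on `U_r`, then a normal ray
realizing the distance `μ < r` can be extended a bit further. -/
lemma extend_ray (hcl : IsClosed S) (hne : S.Nonempty) {r : ℝ}
    (Hu : ∀ x : Euc n, infDist x S < r → ∃! y, y ∈ projSet S x)
    {a v : Euc n} (ha : a ∈ S) (hv : ‖v‖ = 1) {μ ε : ℝ} (hμ0 : 0 < μ) (hμr : μ < r)
    (hμ : infDist (a + μ • v) S = μ) (hε : 0 < ε) (hεb : ε ≤ (r - μ)/2) :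
    infDist (a + (μ + ε) • v) S = μ + ε := by
  set q := a + μ • v with hqdef
  have hqa : dist q a = μ := dist_ray hv (le_of_lt hμ0)
  set M : ℝ → ℝ := fun t => sSup ((fun z => infDist z S) '' closedBall q t) with hMdef
  have hδc : Continuous (fun z : Euc n => infDist z S) := continuous_infDist_pt S
  have hMax : ∀ t : ℝ, 0 ≤ t → ∃ x', x' ∈ closedBall q t ∧ infDist x' S = M t ∧
      ∀ y ∈ closedBall q t, infDist y S ≤ infDist x' S := by
    intro t ht
    obtain ⟨x', hx'mem, hmax⟩ := (isCompact_closedBall q t).exists_isMaxOn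
      ⟨q, by simp [ht]⟩ hδc.continuousOn
    have hgr : IsGreatest ((fun z => infDist z S) '' closedBall q t) (infDist x' S) := by
      refine ⟨⟨x', hx'mem, rfl⟩, ?_⟩
      rintro w ⟨y, hy, rfl⟩
      exact hmax hy
    exact ⟨x', hx'mem, hgr.csSup_eq.symm, fun y hy => hmax hy⟩
  have hMub : ∀ t : ℝ, 0 ≤ t → M t ≤ μ + t := by
    intro t ht
    obtain ⟨x', hx'mem, hx'M, -⟩ := hMax t ht
    rw [← hx'M]
    have h1 : infDist x' S ≤ infDist q S + dist x' q := infDist_le_infDist_add_dist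
    rw [hμ] at h1
    have h2 := mem_closedBall.1 hx'mem
    linarith
  have hMlb : ∀ t : ℝ, 0 ≤ t → μ ≤ M t := by
    intro t ht
    obtain ⟨x', hx'mem, hx'M, hmax⟩ := hMax t ht
    have h2 : infDist q S ≤ infDist x' S := hmax q (by simp [ht])
    rw [hx'M, hμ] at h2
    exact h2
  have hMmono : ∀ t t' : ℝ, 0 ≤ t → t ≤ t' → M t ≤ M t' := by
    intro t t' ht htt'
    obtain ⟨x1, hx1mem, hx1M, hmax1⟩ := hMax t ht
    obtain ⟨x2, hx2mem, hx2M, hmax2⟩ := hMax t' (le_trans ht htt')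
    rw [← hx1M, ← hx2M]
    exact hmax2 x1 (closedBall_subset_closedBall htt' hx1mem)
  have hMlip : ∀ t t' : ℝ, 0 ≤ t → t ≤ t' → M t' ≤ M t + (t' - t) := by
    intro t t' ht htt'
    have ht' : (0:ℝ) ≤ t' := le_trans ht htt'
    obtain ⟨x1, hx1mem, hx1M, hmax1⟩ := hMax t ht
    obtain ⟨x2, hx2mem, hx2M, hmax2⟩ := hMax t' ht'
    rcases eq_or_lt_of_le ht' with h0 | h0
    · have htt0 : t = 0 := le_antisymm (by linarith) ht
      have : M t' ≤ M t := by rw [htt0, ← h0]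
      linarith
    · set z := q + (t/t') • (x2 - q) with hzdef
      have hx2q : ‖x2 - q‖ ≤ t' := by
        rw [← dist_eq_norm]
        exact mem_closedBall.1 hx2mem
      have hzq : dist z q ≤ t := by
        rw [dist_eq_norm, hzdef, add_sub_cancel_left, norm_smul, Real.norm_eq_abs,
          abs_of_nonneg (div_nonneg ht (le_of_lt h0))]
        calc t / t' * ‖x2 - q‖ ≤ t / t' * t' := by
              apply mul_le_mul_of_nonneg_left hx2q (div_nonneg ht (le_of_lt h0))
          _ = t := div_mul_cancel₀ t (ne_of_gt h0)
      have hx2z : dist x2 z ≤ t' - t := by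
        have hxz : x2 - z = (1 - t/t') • (x2 - q) := by
          rw [hzdef, sub_smul, one_smul]
          abel
        have ht1 : 0 ≤ 1 - t/t' := by
          rw [sub_nonneg]
          exact div_le_one_of_le₀ htt' (le_of_lt h0)
        rw [dist_eq_norm, hxz, norm_smul, Real.norm_eq_abs, abs_of_nonneg ht1]
        calc (1 - t/t') * ‖x2 - q‖ ≤ (1 - t/t') * t' :=
              mul_le_mul_of_nonneg_left hx2q ht1
          _ = t' - t := by field_simp
      have h1 : infDist x2 S ≤ infDist z S + dist x2 z := infDist_le_infDist_add_dist
      have h2 : infDist z S ≤ M t := by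
        rw [← hx1M]
        exact hmax1 z (mem_closedBall.2 hzq)
      rw [hx2M] at h1
      linarith
  have hMcont : ContinuousOn (fun t => M t - t) (Icc 0 ε) := by
    have : LipschitzOnWith 2 (fun t => M t - t) (Icc 0 ε) := by
      apply LipschitzOnWith.of_dist_le_mul
      intro t ht t' ht'
      rw [Real.dist_eq, Real.dist_eq]
      have hco : ((2:NNReal):ℝ) = 2 := by norm_num
      rw [hco]
      have habs1 : t - t' ≤ |t - t'| := le_abs_self _
      have habs2 : -|t - t'| ≤ t - t' := neg_abs_le _
      rcases le_total t t' with h | h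
      · have g1 := hMmono t t' ht.1 h
        have g2 := hMlip t t' ht.1 h
        rw [abs_le]
        constructor <;> linarith
      · have g1 := hMmono t' t ht'.1 h
        have g2 := hMlip t' t ht'.1 h
        rw [abs_le]
        constructor <;> linarith
    exact this.continuousOn
  -- the Dini estimate
  have hdini : ∀ t ∈ Ico (0:ℝ) ε, ∀ c > (0:ℝ), ∃ h₀ > (0:ℝ), ∀ h : ℝ, 0 < h → h ≤ h₀ →
      t + h ≤ ε → (M t - t) - c * h ≤ M (t + h) - (t + h) := by
    intro t ht c hc
    obtain ⟨xs, hxsmem, hxsM, hxsmax⟩ := hMax t ht.1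
    set ds := infDist xs S with hdsdef
    have hdslb : μ ≤ ds := by rw [hxsM]; exact hMlb t ht.1
    have hds0 : 0 < ds := lt_of_lt_of_le hμ0 hdslb
    have hdsub : ds < r := by
      have h1 : ds ≤ μ + t := by rw [hxsM]; exact hMub t ht.1
      have h2 : t < ε := ht.2
      linarith
    obtain ⟨p, hp, hpu⟩ := Hu xs hdsub
    have hpd : dist xs p = ds := hp.2
    set g := ds⁻¹ • (xs - p) with hgdef
    have hxspn : ‖xs - p‖ = ds := by rw [← dist_eq_norm]; exact hpd
    have hgn : ‖g‖ = 1 := by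
      rw [hgdef, norm_smul, Real.norm_eq_abs, abs_of_pos (inv_pos.2 hds0), hxspn]
      field_simp
    have hcμ : 0 < c * μ / 2 := by positivity
    obtain ⟨h₁, hh₁, hcont⟩ := proj_cont hcl hne hp (fun w hw => hpu w hw) hcμ
    refine ⟨min h₁ (μ / c), lt_min hh₁ (by positivity), ?_⟩
    intro h hh0 hhle hhB
    have hhh₁ : h ≤ h₁ := le_trans hhle (min_le_left _ _)
    have hhμc : c * h ≤ μ := by
      have := le_trans hhle (min_le_right h₁ (μ / c))
      calc c * h ≤ c * (μ / c) := mul_le_mul_of_nonneg_left this (le_of_lt hc)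
        _ = μ := by field_simp
    set y := xs + h • g with hydef
    have hyxs : dist y xs = h := by
      rw [hydef, dist_eq_norm, add_sub_cancel_left, norm_smul, Real.norm_eq_abs,
        abs_of_pos hh0, hgn, mul_one]
    obtain ⟨qh, hqh⟩ := exists_proj hcl hne y
    have hqhp : dist qh p ≤ c * μ / 2 := hcont y qh (by rw [hyxs]; exact hhh₁) hqh
    have h1 : ds ≤ ‖xs - qh‖ := by
      rw [← dist_eq_norm]
      exact infDist_le_dist_of_mem hqh.1
    have hinner1 : ⟪xs - p, g⟫ = ds := by
      rw [hgdef, real_inner_smul_right, real_inner_self_eq_norm_sq, hxspn, sq,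
        ← mul_assoc, inv_mul_cancel₀ (ne_of_gt hds0), one_mul]
    have hinner2 : -(c * μ / 2) ≤ ⟪p - qh, g⟫ := by
      have hle := real_inner_le_norm (qh - p) g
      rw [hgn, mul_one] at hle
      have hnq : ‖qh - p‖ = dist qh p := (dist_eq_norm qh p).symm
      have : ⟪p - qh, g⟫ = -⟪qh - p, g⟫ := by
        rw [show p - qh = -(qh - p) by abel, inner_neg_left]
      rw [this]
      rw [hnq] at hle
      linarith
    have hinner3 : ds - c * μ / 2 ≤ ⟪xs - qh, g⟫ := by
      have : xs - qh = (xs - p) + (p - qh) := by abel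
      rw [this, inner_add_left, hinner1]
      linarith
    have hexp : ‖y - qh‖ ^ 2 = ‖xs - qh‖ ^ 2 + 2 * (h * ⟪xs - qh, g⟫) + h ^ 2 := by
      have hy2 : y - qh = (xs - qh) + h • g := by rw [hydef]; abel
      rw [hy2, norm_add_sq_real, real_inner_smul_right, norm_smul, Real.norm_eq_abs,
        abs_of_pos hh0, hgn, mul_one]
    have hlow : (ds + h) ^ 2 - h * (c * μ) ≤ ‖y - qh‖ ^ 2 := by
      rw [hexp]
      nlinarith [h1, hinner3, norm_nonneg (xs - qh)]
    have hyq : infDist y S = ‖y - qh‖ := by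
      rw [← hqh.2, dist_eq_norm]
    have hkey : ds + h - c * h ≤ infDist y S := by
      by_cases hsign : ds + h - c * h ≤ 0
      · exact le_trans hsign infDist_nonneg
      · push_neg at hsign
        have hfac : 0 ≤ c * h * (2 * (ds + h) - c * h - μ) :=
          mul_nonneg (mul_pos hc hh0).le (by linarith)
        have hsq : (ds + h - c * h) ^ 2 ≤ ‖y - qh‖ ^ 2 := by
          nlinarith [hlow, hfac]
        rw [hyq]
        exact (abs_le_of_sq_le_sq' hsq (norm_nonneg _)).2
    have hyball : y ∈ closedBall q (t + h) := by
      rw [mem_closedBall]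
      calc dist y q ≤ dist y xs + dist xs q := dist_triangle _ _ _
        _ ≤ h + t := by
            have := mem_closedBall.1 hxsmem
            rw [hyxs]
            linarith
        _ = t + h := by ring
    have hMth : infDist y S ≤ M (t + h) := by
      obtain ⟨x2, hx2mem, hx2M, hmax2⟩ := hMax (t + h) (by linarith [ht.1])
      rw [← hx2M]
      exact hmax2 y hyball
    have hMt : M t = ds := hxsM.symm
    rw [hMt]
    linarith
  -- apply the Dini lemma
  have hM0 : M 0 = μ := by
    obtain ⟨x', hx'mem, hx'M, -⟩ := hMax 0 le_rfl
    have : x' = q := by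
      have := mem_closedBall.1 hx'mem
      exact dist_le_zero.1 this
    rw [← hx'M, this, hμ]
  have hfin : M 0 - 0 ≤ M ε - ε := dini_mono (le_of_lt hε) hMcont hdini
  have hMε : M ε = μ + ε := le_antisymm (hMub ε (le_of_lt hε)) (by rw [hM0] at hfin; linarith)
  -- extract the maximizer and the equality case
  obtain ⟨xs, hxsmem, hxsM, -⟩ := hMax ε (le_of_lt hε)
  rw [hMε] at hxsM
  have hxa : μ + ε ≤ dist xs a := by
    rw [← hxsM]
    exact infDist_le_dist_of_mem ha
  have hxq : dist xs q ≤ ε := mem_closedBall.1 hxsmem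
  have htri : dist xs a ≤ dist xs q + dist q a := dist_triangle _ _ _
  have hxa' : dist xs a = μ + ε := by rw [hqa] at htri; linarith
  have hxq' : dist xs q = ε := by rw [hqa] at htri; linarith
  have hqav : q - a = μ • v := by rw [hqdef]; abel
  have hsplit : xs - a = (xs - q) + μ • v := by rw [← hqav]; abel
  have hnorm1 : ‖xs - a‖ = μ + ε := by rw [← dist_eq_norm]; exact hxa'
  have hnorm2 : ‖xs - q‖ = ε := by rw [← dist_eq_norm]; exact hxq'
  have hμv : ‖μ • v‖ = μ := by
    rw [norm_smul, Real.norm_eq_abs, abs_of_pos hμ0, hv, mul_one]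
  have hinner : ⟪xs - q, v⟫ = ε := by
    have hexp : ‖xs - a‖ ^ 2 = ‖xs - q‖ ^ 2 + 2 * (μ * ⟪xs - q, v⟫) + ‖μ • v‖ ^ 2 := by
      rw [hsplit, norm_add_sq_real, real_inner_smul_right]
    rw [hnorm1, hnorm2, hμv] at hexp
    nlinarith [hexp]
  have hcs : ⟪xs - q, v⟫ = ‖xs - q‖ * ‖v‖ := by
    rw [hinner, hnorm2, hv, mul_one]
  have heq := inner_eq_norm_mul_iff_real.mp hcs
  rw [hv, one_smul, hnorm2] at heq
  have hxs : a + (μ + ε) • v = xs := by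
    rw [add_smul]
    rw [← add_assoc]
    rw [← hqdef]
    rw [← heq]
    abel
  rw [hxs, hxsM]

set_option maxHeartbeats 1600000 in
/-- Forward: prox-regularity implies unique projections on `U_r`. -/
lemma prox_to_unique (hcl : IsClosed S) (hne : S.Nonempty) {r : ℝ} (hr : 0 < r)
    (hpr : IsProxRegular r S) (x : Euc n) (hx : infDist x S < r) :
    ∃! y, y ∈ projSet S x := by
  obtain ⟨p, hp⟩ := exists_proj hcl hne x
  refine ⟨p, hp, ?_⟩
  intro w hw
  set d := infDist x S with hddef
  rcases eq_or_lt_of_le (infDist_nonneg : 0 ≤ infDist x S) with h0 | h0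
  · -- distance zero : x ∈ S and both projections equal x
    have hpx : p = x := by
      have h1 : dist x p = 0 := by rw [hp.2, ← h0]
      exact (dist_eq_zero.1 h1).symm
    have hwx : w = x := by
      have h1 : dist x w = 0 := by rw [hw.2, ← h0]
      exact (dist_eq_zero.1 h1).symm
    rw [hwx, hpx]
  · -- positive distance
    have hd0 : 0 < d := h0
    have hdp : dist x p = d := hp.2
    have hdw : dist x w = d := hw.2
    set η := d⁻¹ • (x - p) with hηdef
    have hxpn : ‖x - p‖ = d := by rw [← dist_eq_norm]; exact hdp
    have hηn : ‖η‖ = 1 := by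
      rw [hηdef, norm_smul, Real.norm_eq_abs, abs_of_pos (inv_pos.2 hd0), hxpn]
      field_simp
    have hray : p + d • η = x := by
      rw [hηdef, smul_smul, mul_inv_cancel₀ (ne_of_gt hd0), one_smul]
      abel
    have hcone : η ∈ proxNormalCone S p := by
      refine ⟨d, hd0, ?_⟩
      rw [hray]
      exact hp
    have hproj := hpr p hp.1 η hcone hηn r hr le_rfl
    have hfar : r ≤ dist (p + r • η) w :=
      (mem_proj_ray_iff hne hp.1 hηn (le_of_lt hr)).1 hproj w hw.1
    have hquad := proj_ray_quad hηn hr hfar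
    -- 2 r ⟪η, w - p⟫ ≤ ‖w - p‖²
    -- rewrite things in terms of x
    have hwp : w - p = (w - x) + d • η := by
      rw [show d • η = x - p by rw [← hray]; abel]
      abel
    have hwx : ‖w - x‖ = d := by rw [← dist_eq_norm, dist_comm]; exact hdw
    have hexp : ‖w - p‖ ^ 2 = ‖w - x‖ ^ 2 + 2 * (d * ⟪w - x, η⟫) + d ^ 2 := by
      rw [hwp, norm_add_sq_real, real_inner_smul_right, norm_smul, Real.norm_eq_abs,
        abs_of_pos hd0, hηn, mul_one]
    have hinner : ⟪η, w - p⟫ = ⟪w - x, η⟫ + d := by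
      rw [hwp, inner_add_right, real_inner_smul_right, real_inner_comm]
      have : ⟪η, η⟫ = 1 := by
        rw [real_inner_self_eq_norm_sq, hηn]; norm_num
      rw [this]
      ring
    rw [hinner, hexp, hwx] at hquad
    -- 2r(⟪w-x,η⟫ + d) ≤ d² + 2d⟪w-x,η⟫ + d²
    have hcs : ⟪x - w, η⟫ ≤ d := by
      have := real_inner_le_norm (x - w) η
      rw [hηn, mul_one, ← dist_eq_norm] at this
      rw [hdw] at this
      exact this
    have hflip : ⟪w - x, η⟫ = -⟪x - w, η⟫ := by
      rw [show w - x = -(x - w) by abel, inner_neg_left]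
    rw [hflip] at hquad
    have hge : d ≤ ⟪x - w, η⟫ := by nlinarith [hquad]
    have heq : ⟪x - w, η⟫ = ‖x - w‖ * ‖η‖ := by
      rw [hηn, mul_one, ← dist_eq_norm, hdw]
      linarith
    have h2 := inner_eq_norm_mul_iff_real.mp heq
    rw [hηn, one_smul, ← dist_eq_norm, hdw] at h2
    -- h2 : x - w = d • η
    have hxw : x - w = x - p := by
      rw [h2, show d • η = x - p by rw [← hray]; abel]
    exact sub_right_injective hxw

set_option maxHeartbeats 1600000 in
/-- Converse: unique projections on `U_r` imply prox-regularity. -/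
lemma unique_to_prox (hcl : IsClosed S) (hne : S.Nonempty) {r : ℝ} (hr : 0 < r)
    (Hu : ∀ x : Euc n, infDist x S < r → ∃! y, y ∈ projSet S x) :
    IsProxRegular r S := by
  intro a ha η hη hηn s hs0 hsr
  obtain ⟨σ, hσ0, hσ⟩ := hη
  have hσ' : ∀ z ∈ S, σ ≤ dist (a + σ • η) z :=
    (mem_proj_ray_iff hne ha hηn (le_of_lt hσ0)).1 hσ
  -- the ray condition holds on [0, min σ s]
  have hK1 : ∀ t : ℝ, 0 ≤ t → t ≤ σ → infDist (a + t • η) S = t := by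
    intro t ht htσ
    have hda : dist (a + t • η) a = t := dist_ray hηn ht
    apply le_antisymm
    · have := infDist_le_dist_of_mem (x := a + t • η) ha
      rwa [hda] at this
    · apply le_infDist' hne
      intro z hz
      apply quad_to_ray hηn ht
      have hq := proj_ray_quad hηn hσ0 (hσ' z hz)
      rcases le_or_gt 0 (⟪η, z - a⟫ : ℝ) with hc | hc
      · nlinarith
      · nlinarith [sq_nonneg (‖z - a‖)]
  -- the set of parameters where the distance is realized
  set K := {t : ℝ | t ∈ Icc 0 s ∧ infDist (a + t • η) S = t} with hKdef
  have hK0 : (0:ℝ) ∈ K := by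
    refine ⟨⟨le_refl _, le_of_lt hs0⟩, ?_⟩
    simp [infDist_zero_of_mem ha]
  have hKc : IsClosed K := by
    have : K = Icc 0 s ∩ (fun t => infDist (a + t • η) S - t) ⁻¹' {0} := by
      ext t
      simp only [hKdef, Set.mem_setOf_eq, Set.mem_inter_iff, Set.mem_preimage,
        Set.mem_singleton_iff]
      constructor
      · rintro ⟨h1, h2⟩; exact ⟨h1, by rw [h2]; ring⟩
      · rintro ⟨h1, h2⟩; exact ⟨h1, by linarith⟩
    rw [this]
    apply ContinuousOn.preimage_isClosed_of_isClosed _ isClosed_Icc isClosed_singleton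
    apply Continuous.continuousOn
    exact ((continuous_infDist_pt S).comp (by continuity)).sub continuous_id
  have hKcpt : IsCompact K := isCompact_Icc.of_isClosed_subset hKc (fun t ht => ht.1)
  have hKne : K.Nonempty := ⟨0, hK0⟩
  have hμK : sSup K ∈ K := hKcpt.sSup_mem hKne
  set μ := sSup K with hμdef
  have hmin : min σ s ∈ K := by
    refine ⟨⟨le_of_lt (lt_min hσ0 hs0), min_le_right _ _⟩, ?_⟩
    exact hK1 _ (le_of_lt (lt_min hσ0 hs0)) (min_le_left _ _)
  have hμpos : 0 < μ := lt_of_lt_of_le (lt_min hσ0 hs0) (le_csSup hKcpt.bddAbove hmin)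
  have hμs : μ ≤ s := hμK.1.2
  rcases eq_or_lt_of_le hμs with heq | hlt
  · -- μ = s : done
    rw [mem_proj_ray_iff hne ha hηn (le_of_lt hs0)]
    intro z hz
    have h2 := hμK.2
    rw [heq] at h2
    exact le_trans (le_of_eq h2.symm) (infDist_le_dist_of_mem hz)
  · -- μ < s : extend, contradiction with sSup
    exfalso
    have hμr : μ < r := lt_of_lt_of_le hlt hsr
    set ε := min ((r - μ)/2) (s - μ) with hεdef
    have hε0 : 0 < ε := lt_min (by linarith) (by linarith)
    have hext := extend_ray hcl hne Hu ha hηn hμpos hμr hμK.2 hε0 (min_le_left _ _)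
    have hmem : μ + ε ∈ K := by
      refine ⟨⟨by linarith, ?_⟩, hext⟩
      have := min_le_right ((r - μ)/2) (s - μ)
      linarith
    have := le_csSup hKcpt.bddAbove hmem
    linarith

set_option maxHeartbeats 1600000 in
/-- Variational inequality for prox-regular sets. -/
lemma prox_var_ineq (hcl : IsClosed S) (hne : S.Nonempty) {r : ℝ} (hr : 0 < r)
    (hpr : IsProxRegular r S) {x px : Euc n} (hpx : px ∈ projSet S x) :
    ∀ z ∈ S, ⟪x - px, z - px⟫ ≤ infDist x S * ‖z - px‖ ^ 2 / (2 * r) := by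
  intro z hz
  set d := infDist x S with hddef
  have hd0 : 0 ≤ d := infDist_nonneg
  rcases eq_or_lt_of_le hd0 with h0 | h0
  · -- d = 0 : x = px
    have hxp : x = px := by
      have h1 : dist x px = 0 := by rw [hpx.2, ← hddef, ← h0]
      exact dist_eq_zero.1 h1
    rw [hxp, sub_self, inner_zero_left, ← h0]
    simp
  · set η := d⁻¹ • (x - px) with hηdef
    have hdp : dist x px = d := hpx.2
    have hxpn : ‖x - px‖ = d := by rw [← dist_eq_norm]; exact hdp
    have hηn : ‖η‖ = 1 := by
      rw [hηdef, norm_smul, Real.norm_eq_abs, abs_of_pos (inv_pos.2 h0), hxpn]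
      field_simp
    have hray : px + d • η = x := by
      rw [hηdef, smul_smul, mul_inv_cancel₀ (ne_of_gt h0), one_smul]
      abel
    have hcone : η ∈ proxNormalCone S px := by
      refine ⟨d, h0, ?_⟩
      rw [hray]
      exact hpx
    have hproj := hpr px hpx.1 η hcone hηn r hr le_rfl
    have hfar : r ≤ dist (px + r • η) z :=
      (mem_proj_ray_iff hne hpx.1 hηn (le_of_lt hr)).1 hproj z hz
    have hquad := proj_ray_quad hηn hr hfar
    -- 2 r ⟪η, z - px⟫ ≤ ‖z - px‖²
    have hxpx : x - px = d • η := by rw [← hray]; abel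
    have hinner : ⟪x - px, z - px⟫ = d * ⟪η, z - px⟫ := by
      rw [hxpx, real_inner_smul_left]
    rw [hinner, le_div_iff₀ (by linarith : (0:ℝ) < 2 * r)]
    nlinarith [mul_le_mul_of_nonneg_left hquad (le_of_lt h0)]


set_option maxHeartbeats 1600000 in
/-- Proposition 2.3 (i)⇔(iii): `S` is `r`-prox-regular iff the metric
projection is single-valued on `U_r = {x : d_S(x) < r}`; moreover, in that case, for
every `s ∈ (0, r)` the projection is `(1 − s/r)⁻¹`-Lipschitz on `U_s`. -/
theorem stmt6 {n : ℕ} (S : Set (Euc n)) (hne : S.Nonempty) (hcl : IsClosed S)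
    (r : ℝ) (hr : 0 < r) :
    (IsProxRegular r S ↔ ∀ x : Euc n, Metric.infDist x S < r → ∃! y, y ∈ projSet S x) ∧
    (IsProxRegular r S →
      ∀ s : ℝ, 0 < s → s < r →
        ∀ x y : Euc n, Metric.infDist x S < s → Metric.infDist y S < s →
          ∀ px ∈ projSet S x, ∀ py ∈ projSet S y,
            dist px py ≤ (1 / (1 - s / r)) * dist x y) := by
  constructor
  · constructor
    · intro hpr x hx
      exact prox_to_unique hcl hne hr hpr x hx
    · intro Hu
      exact unique_to_prox hcl hne hr Hu
  · intro hpr s hs0 hsr x y hx hy px hpx py hpy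
    have h2r : (0:ℝ) < 2 * r := by linarith
    have h1 := prox_var_ineq hcl hne hr hpr hpx py hpy.1
    have h2 := prox_var_ineq hcl hne hr hpr hpy px hpx.1
    rw [le_div_iff₀ h2r] at h1 h2
    -- h1 : ⟪x - px, py - px⟫ * (2r) ≤ infDist x S * ‖py - px‖²
    have hnrev : ‖py - px‖ = ‖px - py‖ := norm_sub_rev _ _
    rw [hnrev] at h1
    have hsplit : (⟪px - py, px - py⟫ : ℝ)
        = ⟪x - px, py - px⟫ + ⟪x - y, px - py⟫ + ⟪y - py, px - py⟫ := by
      have e1 : (⟪px - x, px - py⟫ : ℝ) = ⟪x - px, py - px⟫ := by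
        rw [show px - x = -(x - px) by abel, show px - py = -(py - px) by abel,
          inner_neg_neg]
      have e2 : px - py = (px - x) + ((x - y) + (y - py)) := by abel
      calc (⟪px - py, px - py⟫ : ℝ)
          = ⟪(px - x) + ((x - y) + (y - py)), px - py⟫ := by rw [← e2]
        _ = ⟪px - x, px - py⟫ + (⟪x - y, px - py⟫ + ⟪y - py, px - py⟫) := by
            rw [inner_add_left, inner_add_left]
        _ = ⟪x - px, py - px⟫ + ⟪x - y, px - py⟫ + ⟪y - py, px - py⟫ := by
            rw [e1]; ring
    have hDsq : (⟪px - py, px - py⟫ : ℝ) = ‖px - py‖ ^ 2 :=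
      real_inner_self_eq_norm_sq _
    have hmid : (⟪x - y, px - py⟫ : ℝ) ≤ ‖x - y‖ * ‖px - py‖ := by
      have := real_inner_le_norm (x - y) (px - py)
      linarith
    have hfrac : 0 < 1 - s / r := by
      have : s / r < 1 := (div_lt_one hr).2 hsr
      linarith
    rw [dist_eq_norm, dist_eq_norm]
    rcases eq_or_lt_of_le (norm_nonneg (px - py)) with hD0 | hD0
    · rw [← hD0]
      have h01 : (0:ℝ) ≤ 1 / (1 - s / r) := by positivity
      exact mul_nonneg h01 (norm_nonneg _)
    · rw [one_div, inv_mul_eq_div, le_div_iff₀ hfrac]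
      -- ‖px - py‖ * (1 - s/r) ≤ ‖x - y‖
      have hbig : ‖px - py‖ ^ 2 * (2 * r)
          ≤ (infDist x S + infDist y S) * ‖px - py‖ ^ 2
            + ‖x - y‖ * ‖px - py‖ * (2 * r) := by
        rw [← hDsq, hsplit]
        nlinarith [h1, h2, hmid, h2r]
      have hds : infDist x S + infDist y S ≤ 2 * s := by linarith
      have hkey : ‖px - py‖ * (2 * r - 2 * s) ≤ ‖x - y‖ * (2 * r) := by
        nlinarith [hbig, hD0, mul_le_mul_of_nonneg_right hds (sq_nonneg (‖px - py‖))]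
      have hrw : ‖px - py‖ * (1 - s / r) = ‖px - py‖ * (2 * r - 2 * s) / (2 * r) := by
        field_simp
      rw [hrw, div_le_iff₀ h2r]
      exact hkey
end
end

section
/- Let S ⊆ ℝⁿ be a nonempty closed set and r > 0. Then S is r-prox-regular if and only if for every x ∈ U_r \ S (where U_r := {x ∈ ℝⁿ : d_S(x) < r}) the projection Π_S(x) is a singleton and, identifying it with its unique element, Π_S(x) = Π_S(Π_S(x) + s·(x − Π_S(x))/|x − Π_S(x)|) for every s ∈ [0, r). -/
open Metric Set

noncomputable section

lemma dist_add_smul {n : ℕ} (y η : Euc n) {t : ℝ} (ht : 0 ≤ t) (hη : ‖η‖ = 1) :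
    dist (y + t • η) y = t := by
  rw [dist_eq_norm, add_sub_cancel_left, norm_smul, hη, mul_one, Real.norm_eq_abs,
    abs_of_nonneg ht]

/-- If `y` is a projection of `y + s•η` and of `y + s'•η` with `s < s'`, then it is the
unique projection of `y + s•η`. -/
lemma key_singleton {n : ℕ} {S : Set (Euc n)} {y η : Euc n}
    (hy : y ∈ S) (hη : ‖η‖ = 1) {s s' : ℝ} (hs : 0 ≤ s) (hss' : s < s')
    (h1 : y ∈ projSet S (y + s • η)) (h2 : y ∈ projSet S (y + s' • η)) :
    projSet S (y + s • η) = {y} := by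
  have hs' : (0:ℝ) ≤ s' := le_trans hs hss'.le
  have hd1 : Metric.infDist (y + s • η) S = s := by
    rw [← h1.2, dist_add_smul y η hs hη]
  have hd2 : Metric.infDist (y + s' • η) S = s' := by
    rw [← h2.2, dist_add_smul y η hs' hη]
  ext z
  simp only [Set.mem_singleton_iff, projSet, Set.mem_setOf_eq]
  constructor
  · rintro ⟨hzS, hzd⟩
    set u : Euc n := (y + s • η) - z with hu_def
    have hu : ‖u‖ = s := by
      rw [hu_def, ← dist_eq_norm, hzd, hd1]
    have hz2 : s' ≤ ‖u + (s' - s) • η‖ := by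
      have h := Metric.infDist_le_dist_of_mem hzS (x := y + s' • η)
      rw [hd2, dist_eq_norm] at h
      have : y + s' • η - z = u + (s' - s) • η := by
        rw [hu_def]; module
      rwa [this] at h
    have hexp : ‖u + (s' - s) • η‖ ^ 2
        = s ^ 2 + 2 * ((s' - s) * inner ℝ u η) + (s' - s) ^ 2 := by
      rw [norm_add_sq_real, real_inner_smul_right, norm_smul, hη, hu, Real.norm_eq_abs,
        abs_of_nonneg (by linarith : (0:ℝ) ≤ s' - s), mul_one]
    have hge : s ≤ inner ℝ u η := by
      have hsq : s' ^ 2 ≤ ‖u + (s' - s) • η‖ ^ 2 := by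
        have := norm_nonneg (u + (s' - s) • η)
        nlinarith
      rw [hexp] at hsq
      nlinarith
    have hle : (inner ℝ u η : ℝ) ≤ s := by
      have := real_inner_le_norm u η
      rw [hu, hη, mul_one] at this
      exact this
    have heq : (inner ℝ u η : ℝ) = ‖u‖ * ‖η‖ := by rw [hu, hη, mul_one]; linarith
    have hcol := (inner_eq_norm_mul_iff_real).mp heq
    rw [hη, hu, one_smul] at hcol
    -- hcol : u = s • η
    have hyz : y - z = 0 := by
      have h' : y - z = u - s • η := by rw [hu_def]; abel
      rw [h', hcol, sub_self]
    exact (sub_eq_zero.mp hyz).symm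
  · rintro rfl
    exact ⟨hy, h1.2⟩

/-- Monotonicity: if `x̄` projects onto itself from distance `σ`, also from any `σ' ≤ σ`. -/
lemma proj_of_le {n : ℕ} {S : Set (Euc n)} {xb η : Euc n} (hx : xb ∈ S) (hη : ‖η‖ = 1)
    {σ σ' : ℝ} (h0 : 0 ≤ σ') (hle : σ' ≤ σ)
    (h : xb ∈ projSet S (xb + σ • η)) : xb ∈ projSet S (xb + σ' • η) := by
  have h0σ : (0:ℝ) ≤ σ := le_trans h0 hle
  have hdσ : Metric.infDist (xb + σ • η) S = σ := by
    rw [← h.2, dist_add_smul xb η h0σ hη]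
  have hdist : dist (xb + σ' • η) xb = σ' := dist_add_smul xb η h0 hη
  refine ⟨hx, le_antisymm ?_ ?_⟩
  · rw [hdist]
    have htri : Metric.infDist (xb + σ • η) S
        ≤ Metric.infDist (xb + σ' • η) S + dist (xb + σ • η) (xb + σ' • η) := by
      exact Metric.infDist_le_infDist_add_dist
    have hd2 : dist (xb + σ • η) (xb + σ' • η) = σ - σ' := by
      rw [dist_eq_norm]
      have : xb + σ • η - (xb + σ' • η) = (σ - σ') • η := by module
      rw [this, norm_smul, hη, mul_one, Real.norm_eq_abs, abs_of_nonneg (by linarith)]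
    rw [hdσ, hd2] at htri
    linarith
  · rw [hdist]
    calc Metric.infDist (xb + σ' • η) S ≤ dist (xb + σ' • η) xb :=
          Metric.infDist_le_dist_of_mem hx
      _ = σ' := hdist

/-- Proposition 2.3 (i)⇔(iv): `S` is `r`-prox-regular iff for every
`x ∈ U_r \ S` the projection `Π_S(x)` is a singleton `{y}` and
`Π_S(y + s (x − y)/|x − y|) = {y}` for every `s ∈ [0, r)`. -/
theorem stmt7 {n : ℕ} (S : Set (Euc n)) (hne : S.Nonempty) (hcl : IsClosed S)
    (r : ℝ) (hr : 0 < r) :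
    IsProxRegular r S ↔
      ∀ x : Euc n, Metric.infDist x S < r → x ∉ S →
        ∃ y : Euc n, projSet S x = {y} ∧
          ∀ s : ℝ, 0 ≤ s → s < r →
            projSet S (y + (s / ‖x - y‖) • (x - y)) = {y} := by
  constructor
  · intro hpr x hxr hxS
    obtain ⟨y, hyS, hyd⟩ := hcl.exists_infDist_eq_dist hne x
    have hyproj : y ∈ projSet S x := ⟨hyS, hyd.symm⟩
    have hxy : x ≠ y := by rintro rfl; exact hxS hyS
    have hxy0 : x - y ≠ 0 := sub_ne_zero.mpr hxy
    set d : ℝ := ‖x - y‖ with hd_def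
    have hd_pos : 0 < d := norm_pos_iff.mpr hxy0
    set η : Euc n := ‖x - y‖⁻¹ • (x - y) with hη_def
    have hη : ‖η‖ = 1 := norm_smul_inv_norm hxy0
    have hxeq : x = y + d • η := by
      rw [hη_def, hd_def, smul_inv_smul₀ (norm_ne_zero_iff.mpr hxy0)]
      abel
    have hdr : d < r := by
      have : d = Metric.infDist x S := by
        rw [hd_def, ← dist_eq_norm, hyd]
      linarith [this ▸ hxr]
    have hcone : η ∈ proxNormalCone S y := ⟨d, hd_pos, by rwa [← hxeq]⟩
    have hrproj : y ∈ projSet S (y + r • η) :=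
      hpr y hyS η hcone hη r hr le_rfl
    have hsmul : ∀ s : ℝ, (s / ‖x - y‖) • (x - y) = s • η := by
      intro s
      rw [hη_def, smul_smul, div_eq_mul_inv]
    have hmem : ∀ s : ℝ, 0 ≤ s → s < r → y ∈ projSet S (y + s • η) := by
      intro s hs0 hsr
      rcases eq_or_lt_of_le hs0 with h | h
      · refine ⟨hyS, ?_⟩
        rw [← h, zero_smul, add_zero, Metric.infDist_zero_of_mem hyS, dist_self]
      · exact hpr y hyS η hcone hη s h hsr.le
    refine ⟨y, ?_, ?_⟩
    · rw [hxeq]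
      exact key_singleton hyS hη hd_pos.le hdr (hxeq ▸ hyproj) hrproj
    · intro s hs0 hsr
      rw [hsmul s]
      exact key_singleton hyS hη hs0 hsr (hmem s hs0 hsr) hrproj
  · intro h xb hxb η hcone hη s hs0 hsr
    obtain ⟨σ, hσ0, hσproj⟩ := hcone
    set σ₀ : ℝ := min σ (r / 2) with hσ₀_def
    have hσ₀_pos : 0 < σ₀ := lt_min hσ0 (by linarith)
    have hσ₀_le : σ₀ ≤ σ := min_le_left _ _
    have hσ₀_lt_r : σ₀ < r := lt_of_le_of_lt (min_le_right _ _) (by linarith)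
    have hproj₀ : xb ∈ projSet S (xb + σ₀ • η) :=
      proj_of_le hxb hη hσ₀_pos.le hσ₀_le hσproj
    set x : Euc n := xb + σ₀ • η with hx_def
    have hdx : dist x xb = σ₀ := dist_add_smul xb η hσ₀_pos.le hη
    have hdS : Metric.infDist x S = σ₀ := by rw [← hproj₀.2, hdx]
    have hxnotS : x ∉ S := by
      intro hmem
      have := Metric.infDist_zero_of_mem hmem
      rw [hdS] at this; linarith
    obtain ⟨y, hy1, hy2⟩ := h x (by rw [hdS]; exact hσ₀_lt_r) hxnotS
    have hyeq : y = xb := by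
      have := hy1 ▸ hproj₀
      exact (Set.mem_singleton_iff.mp this).symm
    subst hyeq
    have hxsub : x - y = σ₀ • η := by rw [hx_def]; abel
    have hxnorm : ‖x - y‖ = σ₀ := by
      rw [hxsub, norm_smul, hη, mul_one, Real.norm_eq_abs, abs_of_pos hσ₀_pos]
    have hkey : ∀ s' : ℝ, 0 ≤ s' → s' < r → projSet S (y + s' • η) = {y} := by
      intro s' hs'0 hs'r
      have := hy2 s' hs'0 hs'r
      rw [hxnorm, hxsub, smul_smul, div_mul_cancel₀ _ (ne_of_gt hσ₀_pos)] at this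
      exact this
    rcases lt_or_eq_of_le hsr with hlt | heq
    · rw [hkey s hs0.le hlt]
      exact Set.mem_singleton _
    · -- s = r : limit argument
      subst heq
      have hinfle : Metric.infDist (y + s • η) S ≤ s := by
        calc Metric.infDist (y + s • η) S ≤ dist (y + s • η) y :=
              Metric.infDist_le_dist_of_mem hxb
          _ = s := dist_add_smul y η hs0.le hη
      have hinfge : s ≤ Metric.infDist (y + s • η) S := by
        by_contra hcon
        push_neg at hcon
        set D : ℝ := Metric.infDist (y + s • η) S with hD_def
        have hD0 : 0 ≤ D := Metric.infDist_nonneg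
        set s' : ℝ := (D + 3 * s) / 4 with hs'_def
        have hs'0 : 0 ≤ s' := by positivity
        have hs'r : s' < s := by rw [hs'_def]; linarith
        have hinf' : Metric.infDist (y + s' • η) S = s' := by
          have hmem' : y ∈ projSet S (y + s' • η) := by
            rw [hkey s' hs'0 hs'r]; exact Set.mem_singleton _
          rw [← hmem'.2, dist_add_smul y η hs'0 hη]
        have htri : Metric.infDist (y + s' • η) S
            ≤ Metric.infDist (y + s • η) S + dist (y + s' • η) (y + s • η) :=
          Metric.infDist_le_infDist_add_dist
        have hdd : dist (y + s' • η) (y + s • η) = s - s' := by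
          rw [dist_eq_norm]
          have : y + s' • η - (y + s • η) = (s' - s) • η := by module
          rw [this, norm_smul, hη, mul_one, Real.norm_eq_abs,
            abs_of_nonpos (by linarith), neg_sub]
        rw [hinf', hdd, ← hD_def] at htri
        rw [hs'_def] at htri
        linarith
      refine ⟨hxb, ?_⟩
      rw [dist_add_smul y η hs0.le hη]
      linarith
end
end

section
/- Let S ⊆ ℝⁿ be a nonempty closed set and x̄ ∈ S. If S is Quasi Prox-Regular at x̄, then the Clarke tangent cone T^C_S(x̄) is a QDQ approximating cone to S at x̄. -/
open Metric Set Filter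

noncomputable section

/-- `S` is Quasi Prox-Regular at `xbar ∈ S`: for some `δ > 0`, either
`(xbar + T^C_S(xbar)) ∩ B_δ(xbar) ⊆ S`, or `S` coincides on `B_δ(xbar)` with an
`r`-prox-regular set for some `r > 0`. -/
def QuasiProxRegularAt {n : ℕ} (S : Set (Euc n)) (xbar : Euc n) : Prop :=
  ∃ δ > (0 : ℝ),
    ({x | ∃ v ∈ clarkeTangentCone S xbar, x = xbar + v} ∩ Metric.ball xbar δ ⊆ S) ∨
    (∃ r > (0 : ℝ), ∃ S' : Set (Euc n), S'.Nonempty ∧ IsClosed S' ∧ IsProxRegular r S' ∧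
      S ∩ Metric.ball xbar δ = S' ∩ Metric.ball xbar δ)

/-- A modulus: nondecreasing on `[0, ∞)`, nonnegative, `ρ(0) = 0 = lim_{s→0⁺} ρ(s)`. -/
def IsModulus (ρ : ℝ → ℝ) : Prop :=
  (∀ s, 0 ≤ ρ s) ∧ MonotoneOn ρ (Set.Ici 0) ∧ ρ 0 = 0 ∧
    Filter.Tendsto ρ (nhdsWithin (0 : ℝ) (Set.Ioi 0)) (nhds 0)

/-- `Λ` is a Quasi Differential Quotient (QDQ) of the set-valued map `G : ℝᴺ ⇝ ℝⁿ`
at `(ξbar, ybar)` in the direction of `Γ`. -/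
def IsQDQ {N n : ℕ} (G : Euc N → Set (Euc n)) (ξbar : Euc N) (ybar : Euc n)
    (Λ : Set (Euc N →L[ℝ] Euc n)) (Γ : Set (Euc N)) : Prop :=
  IsCompact Λ ∧
  ∃ ρ : ℝ → ℝ, IsModulus ρ ∧ ∃ δbar > (0 : ℝ), ∀ δ : ℝ, 0 < δ → δ ≤ δbar →
    ∃ (L : Euc N → (Euc N →L[ℝ] Euc n)) (h : Euc N → Euc n),
      ContinuousOn (fun ξ => (L ξ, h ξ)) (Metric.ball ξbar δ ∩ Γ) ∧
      ∀ ξ ∈ Metric.ball ξbar δ ∩ Γ,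
        ybar + L ξ (ξ - ξbar) + h ξ ∈ G ξ ∧
        (∃ L' ∈ Λ, ‖L ξ - L'‖ ≤ ρ δ) ∧ ‖h ξ‖ ≤ δ * ρ δ

/-- `𝒦` is a QDQ approximating cone to `S` at `xbar`. -/
def IsQDQApproxCone {n : ℕ} (𝒦 : Set (Euc n)) (S : Set (Euc n)) (xbar : Euc n) : Prop :=
  Convex ℝ 𝒦 ∧
  ∃ (N : ℕ) (G : Euc N → Set (Euc n)) (Γ : Set (Euc N)) (L : Euc N →L[ℝ] Euc n),
    Convex ℝ Γ ∧ (∀ a : ℝ, 0 ≤ a → ∀ ξ ∈ Γ, a • ξ ∈ Γ) ∧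
    IsQDQ G 0 xbar {L} Γ ∧ (∀ ξ ∈ Γ, G ξ ⊆ S) ∧ 𝒦 = L '' Γ

namespace Stmt9Aux

variable {n : ℕ}

def Ff (xbar : Euc n) : Filter (ℝ × Euc n) :=
  (nhdsWithin (0 : ℝ) (Set.Ioi 0)) ×ˢ (nhds xbar)

def ff (S : Set (Euc n)) (v : Euc n) : ℝ × Euc n → ℝ :=
  fun q => (Metric.infDist (q.2 + q.1 • v) S - Metric.infDist q.2 S) / q.1

instance (xbar : Euc n) : (Ff xbar).NeBot := by
  unfold Ff; infer_instance

lemma mem_cone_iff_limsup {S : Set (Euc n)} {xbar v : Euc n} :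
    v ∈ clarkeTangentCone S xbar ↔ Filter.limsup (ff S v) (Ff xbar) = 0 := Iff.rfl

lemma abs_ff_le (S : Set (Euc n)) (v : Euc n) {q : ℝ × Euc n}
    (hq : 0 < q.1) : |ff S v q| ≤ ‖v‖ := by
  have h1 : |Metric.infDist (q.2 + q.1 • v) S - Metric.infDist q.2 S|
      ≤ dist (q.2 + q.1 • v) q.2 := by
    have := (lipschitz_infDist_pt S).dist_le_mul (q.2 + q.1 • v) q.2
    simpa [Real.dist_eq] using this
  have h2 : dist (q.2 + q.1 • v) q.2 = q.1 * ‖v‖ := by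
    rw [dist_eq_norm]
    simp [norm_smul, abs_of_pos hq]
  rw [ff, abs_div, abs_of_pos hq]
  rw [div_le_iff₀ hq]
  calc |Metric.infDist (q.2 + q.1 • v) S - Metric.infDist q.2 S| ≤ q.1 * ‖v‖ := h1.trans_eq h2
    _ = ‖v‖ * q.1 := mul_comm _ _

lemma eventually_pos (xbar : Euc n) : ∀ᶠ q : ℝ × Euc n in Ff xbar, 0 < q.1 :=
  Filter.Eventually.prod_inl (by filter_upwards [self_mem_nhdsWithin] with t ht using ht) _

lemma bddUnder (S : Set (Euc n)) (xbar v : Euc n) :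
    IsBoundedUnder (· ≤ ·) (Ff xbar) (ff S v) :=
  ⟨‖v‖, Filter.eventually_map.2 (by
    filter_upwards [eventually_pos xbar] with q hq using
      (le_abs_self _).trans (abs_ff_le S v hq))⟩

lemma bddUnder_ge (S : Set (Euc n)) (xbar v : Euc n) :
    IsBoundedUnder (· ≥ ·) (Ff xbar) (ff S v) :=
  ⟨-‖v‖, Filter.eventually_map.2 (by
    filter_upwards [eventually_pos xbar] with q hq using
      neg_le_of_abs_le (abs_ff_le S v hq))⟩

lemma cobdd (S : Set (Euc n)) (xbar v : Euc n) :
    IsCoboundedUnder (· ≤ ·) (Ff xbar) (ff S v) :=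
  (bddUnder_ge S xbar v).isCoboundedUnder_le

/-- frequently `0 ≤ ff` (needs `xbar ∈ S`). -/
lemma frequently_nonneg {S : Set (Euc n)} {xbar : Euc n} (hxbar : xbar ∈ S) (v : Euc n) :
    ∃ᶠ q in Ff xbar, 0 ≤ ff S v q := by
  have hG : (nhdsWithin (0 : ℝ) (Set.Ioi 0)) ×ˢ (pure xbar : Filter (Euc n)) ≤ Ff xbar :=
    Filter.prod_mono le_rfl (pure_le_nhds xbar)
  have hGn : ((nhdsWithin (0 : ℝ) (Set.Ioi 0)) ×ˢ (pure xbar : Filter (Euc n))).NeBot := by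
    infer_instance
  have hev : ∀ᶠ q : ℝ × Euc n in (nhdsWithin (0 : ℝ) (Set.Ioi 0)) ×ˢ (pure xbar : Filter (Euc n)),
      0 ≤ ff S v q := by
    have h1 : ∀ᶠ q : ℝ × Euc n in (nhdsWithin (0 : ℝ) (Set.Ioi 0)) ×ˢ
        (pure xbar : Filter (Euc n)), 0 < q.1 ∧ q.2 = xbar := by
      apply Filter.Eventually.and
      · exact Filter.Eventually.prod_inl
          (by filter_upwards [self_mem_nhdsWithin] with t ht using ht) _
      · exact Filter.Eventually.prod_inr (Filter.eventually_pure.2 rfl : ∀ᶠ y in (pure xbar : Filter (Euc n)), y = xbar) _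
    filter_upwards [h1] with q hq
    rcases hq with ⟨hq1, hq2⟩
    rw [ff, hq2, Metric.infDist_zero_of_mem hxbar, sub_zero]
    exact div_nonneg Metric.infDist_nonneg hq1.le
  exact (hev.frequently).filter_mono hG

/-- the key membership criterion. -/
lemma mem_cone_iff {S : Set (Euc n)} {xbar : Euc n} (hxbar : xbar ∈ S) (v : Euc n) :
    v ∈ clarkeTangentCone S xbar ↔ ∀ ε > (0:ℝ), ∀ᶠ q in Ff xbar, ff S v q < ε := by
  rw [mem_cone_iff_limsup]
  constructor
  · intro h ε hε
    exact Filter.eventually_lt_of_limsup_lt (by rw [h]; exact hε) (bddUnder S xbar v)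
  · intro h
    have hle : Filter.limsup (ff S v) (Ff xbar) ≤ 0 :=
      (Filter.limsup_le_iff (cobdd S xbar v) (bddUnder S xbar v)).2 (fun y hy => h y hy)
    have hge : (0:ℝ) ≤ Filter.limsup (ff S v) (Ff xbar) :=
      Filter.le_limsup_of_frequently_le (frequently_nonneg hxbar v) (bddUnder S xbar v)
    linarith

lemma zero_mem_cone (S : Set (Euc n)) (xbar : Euc n) :
    (0 : Euc n) ∈ clarkeTangentCone S xbar := by
  rw [mem_cone_iff_limsup]
  have : ff S (0 : Euc n) = fun _ => (0:ℝ) := by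
    funext q; simp [ff]
  rw [this]
  exact Filter.limsup_const 0

lemma smul_mem_cone {S : Set (Euc n)} {xbar : Euc n} (hxbar : xbar ∈ S)
    {a : ℝ} (ha : 0 ≤ a) {v : Euc n} (hv : v ∈ clarkeTangentCone S xbar) :
    a • v ∈ clarkeTangentCone S xbar := by
  rcases eq_or_lt_of_le ha with h | hpos
  · rw [← h, zero_smul]; exact zero_mem_cone S xbar
  rw [mem_cone_iff hxbar]
  intro ε hε
  have hmap : Filter.Tendsto (fun q : ℝ × Euc n => (a * q.1, q.2)) (Ff xbar) (Ff xbar) := by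
    have h1 : Filter.Tendsto (fun t : ℝ => a * t) (nhdsWithin (0:ℝ) (Set.Ioi 0))
        (nhdsWithin (0:ℝ) (Set.Ioi 0)) := by
      apply tendsto_nhdsWithin_of_tendsto_nhds_of_eventually_within
      · have h2 : Filter.Tendsto (fun t : ℝ => a * t) (nhds 0) (nhds 0) := by
          have h3 := (continuous_mul_left a).tendsto (0:ℝ)
          simpa using h3
        exact h2.mono_left nhdsWithin_le_nhds
      · filter_upwards [self_mem_nhdsWithin] with t ht
        exact mul_pos hpos ht
    exact (h1.comp tendsto_fst).prodMk tendsto_snd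
  have hev : ∀ᶠ q in Ff xbar, ff S v (a * q.1, q.2) < ε / a := by
    have h1 := (mem_cone_iff hxbar v).1 hv (ε / a) (div_pos hε hpos)
    exact hmap.eventually h1
  filter_upwards [hev] with q hq
  have heq : ff S (a • v) q = a * ff S v (a * q.1, q.2) := by
    rw [ff, ff]
    simp only [smul_smul]
    rw [mul_comm q.1 a]
    rcases eq_or_ne q.1 0 with h0 | h0
    · simp [h0]
    · field_simp
  rw [heq]
  calc a * ff S v (a * q.1, q.2) < a * (ε / a) := by
        exact mul_lt_mul_of_pos_left hq hpos
    _ = ε := by field_simp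

lemma add_mem_cone {S : Set (Euc n)} {xbar : Euc n} (hxbar : xbar ∈ S)
    {u v : Euc n} (hu : u ∈ clarkeTangentCone S xbar) (hv : v ∈ clarkeTangentCone S xbar) :
    u + v ∈ clarkeTangentCone S xbar := by
  rw [mem_cone_iff hxbar]
  intro ε hε
  have hmap : Filter.Tendsto (fun q : ℝ × Euc n => (q.1, q.2 + q.1 • u)) (Ff xbar) (Ff xbar) := by
    apply Filter.Tendsto.prodMk tendsto_fst
    have hc : Continuous (fun q : ℝ × Euc n => q.2 + q.1 • u) :=
      continuous_snd.add (continuous_fst.smul continuous_const)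
    have h0 : Filter.Tendsto (fun q : ℝ × Euc n => q) (Ff xbar) (nhds ((0:ℝ), xbar)) := by
      rw [nhds_prod_eq]
      exact tendsto_id.mono_left (Filter.prod_mono nhdsWithin_le_nhds le_rfl)
    have := (hc.tendsto ((0:ℝ), xbar)).comp h0
    simpa [Ff, Function.comp_def] using this
  have hev1 := (mem_cone_iff hxbar u).1 hu (ε/2) (half_pos hε)
  have hev2 : ∀ᶠ q in Ff xbar, ff S v (q.1, q.2 + q.1 • u) < ε / 2 :=
    hmap.eventually ((mem_cone_iff hxbar v).1 hv (ε/2) (half_pos hε))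
  filter_upwards [hev1, hev2] with q hq1 hq2
  have heq : ff S (u + v) q = ff S u q + ff S v (q.1, q.2 + q.1 • u) := by
    rw [ff, ff, ff]
    have : q.2 + q.1 • (u + v) = q.2 + q.1 • u + q.1 • v := by
      rw [smul_add]; abel
    rw [this, ← add_div]
    ring_nf
  rw [heq]; linarith

lemma convex_cone {S : Set (Euc n)} {xbar : Euc n} (hxbar : xbar ∈ S) :
    Convex ℝ (clarkeTangentCone S xbar) := by
  intro v hv w hw a b ha hb hab
  exact add_mem_cone hxbar (smul_mem_cone hxbar ha hv) (smul_mem_cone hxbar hb hw)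

/-- specialize an eventually over the product filter to `x = xbar`, small `t`. -/
lemma extract {xbar : Euc n} {P : ℝ × Euc n → Prop} (h : ∀ᶠ q in Ff xbar, P q) :
    ∃ t₀ > (0:ℝ), ∀ t : ℝ, 0 < t → t < t₀ → P (t, xbar) := by
  rw [Ff, Filter.eventually_prod_iff] at h
  rcases h with ⟨pa, hpa, pb, hpb, himp⟩
  rcases Metric.mem_nhdsWithin_iff.1 hpa with ⟨t₀, ht₀, hball⟩
  refine ⟨t₀, ht₀, fun t ht htlt => ?_⟩
  have hpat : pa t := hball ⟨by simpa [Real.dist_eq, abs_of_pos ht] using htlt, ht⟩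
  exact himp hpat hpb.self_of_nhds

/-- uniform `o(‖ξ‖)` estimate over the cone. -/
lemma uniform_est {S : Set (Euc n)} {xbar : Euc n} (hxbar : xbar ∈ S) :
    ∀ ε > (0:ℝ), ∃ s₀ > (0:ℝ), ∀ ξ ∈ clarkeTangentCone S xbar, ‖ξ‖ ≤ s₀ →
      Metric.infDist (xbar + ξ) S ≤ ε * ‖ξ‖ := by
  intro ε hε
  set K := clarkeTangentCone S xbar ∩ Metric.sphere (0 : Euc n) 1 with hK
  have hTB : TotallyBounded K :=
    (isCompact_sphere (0 : Euc n) 1).totallyBounded.subset inter_subset_right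
  obtain ⟨net, hnet_sub, hnet_fin, hnet_cov⟩ :=
    Metric.finite_approx_of_totallyBounded hTB (ε/2) (half_pos hε)
  have hev : ∀ᶠ q in Ff xbar, ∀ w ∈ net, ff S w q < ε/2 := by
    rw [Filter.eventually_all_finite hnet_fin]
    intro w hw
    exact (mem_cone_iff hxbar w).1 (hnet_sub hw).1 (ε/2) (half_pos hε)
  obtain ⟨t₀, ht₀, hsmall⟩ := extract hev
  refine ⟨t₀/2, half_pos ht₀, fun ξ hξ hξnorm => ?_⟩
  rcases eq_or_ne ξ 0 with rfl | hne
  · simp [Metric.infDist_zero_of_mem hxbar]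
  have hnormpos : 0 < ‖ξ‖ := norm_pos_iff.2 hne
  set w := ‖ξ‖⁻¹ • ξ with hw
  have hwT : w ∈ clarkeTangentCone S xbar :=
    smul_mem_cone hxbar (inv_nonneg.2 hnormpos.le) hξ
  have hwnorm : ‖w‖ = 1 := by
    rw [hw, norm_smul, Real.norm_eq_abs, abs_of_pos (inv_pos.2 hnormpos)]
    field_simp
  have hwK : w ∈ K := ⟨hwT, by simpa [mem_sphere_iff_norm] using hwnorm⟩
  obtain ⟨v, hvnet, hv⟩ := Set.mem_iUnion₂.1 (hnet_cov hwK)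
  have hdist : dist w v < ε/2 := Metric.mem_ball.1 hv
  have htlt : ‖ξ‖ < t₀ := lt_of_le_of_lt hξnorm (by linarith)
  have hest := hsmall ‖ξ‖ hnormpos htlt v hvnet
  -- hest : ff S v (‖ξ‖, xbar) < ε/2
  have hest' : Metric.infDist (xbar + ‖ξ‖ • v) S < (ε/2) * ‖ξ‖ := by
    rw [ff] at hest
    simp only [Metric.infDist_zero_of_mem hxbar, sub_zero] at hest
    rw [div_lt_iff₀ hnormpos] at hest
    linarith [hest]
  have hxi : ‖ξ‖ • w = ξ := by
    rw [hw, smul_smul, mul_inv_cancel₀ hnormpos.ne', one_smul]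
  calc Metric.infDist (xbar + ξ) S
      ≤ Metric.infDist (xbar + ‖ξ‖ • v) S + dist (xbar + ξ) (xbar + ‖ξ‖ • v) :=
        Metric.infDist_le_infDist_add_dist
    _ ≤ (ε/2) * ‖ξ‖ + (ε/2) * ‖ξ‖ := by
        apply add_le_add hest'.le
        have heq2 : dist (xbar + ξ) (xbar + ‖ξ‖ • v) = ‖ξ‖ * dist w v := by
          rw [dist_eq_norm, dist_eq_norm]
          have h3 : xbar + ξ - (xbar + ‖ξ‖ • v) = ‖ξ‖ • (w - v) := by
            rw [smul_sub, hxi]; abel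
          rw [h3, norm_smul, Real.norm_eq_abs, abs_of_pos hnormpos]
        rw [heq2]
        exact mul_le_mul_of_nonneg_left hdist.le hnormpos.le |>.trans_eq (mul_comm _ _)
    _ = ε * ‖ξ‖ := by ring

/-- the modulus. -/
def qmod (S : Set (Euc n)) (xbar : Euc n) (s : ℝ) : ℝ :=
  sSup ((fun ξ => Metric.infDist (xbar + ξ) S / ‖ξ‖) ''
    {ξ | ξ ∈ clarkeTangentCone S xbar ∧ ‖ξ‖ ≤ s})

section qmod
variable {S : Set (Euc n)} {xbar : Euc n}

lemma qmod_mem_bounds (hxbar : xbar ∈ S) (s : ℝ) : ∀ y ∈ (fun ξ => Metric.infDist (xbar + ξ) S / ‖ξ‖) ''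
    {ξ | ξ ∈ clarkeTangentCone S xbar ∧ ‖ξ‖ ≤ s}, 0 ≤ y ∧ y ≤ 1 := by
  rintro y ⟨ξ, ⟨_, _⟩, rfl⟩
  rcases eq_or_ne ξ 0 with rfl | hne
  · simp
  have hpos : 0 < ‖ξ‖ := norm_pos_iff.2 hne
  constructor
  · exact div_nonneg Metric.infDist_nonneg hpos.le
  · rw [div_le_one hpos]
    calc Metric.infDist (xbar + ξ) S ≤ dist (xbar + ξ) xbar :=
          Metric.infDist_le_dist_of_mem hxbar
      _ = ‖ξ‖ := by rw [dist_eq_norm]; simp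

lemma qmod_bddAbove (hxbar : xbar ∈ S) (s : ℝ) : BddAbove ((fun ξ => Metric.infDist (xbar + ξ) S / ‖ξ‖) ''
    {ξ | ξ ∈ clarkeTangentCone S xbar ∧ ‖ξ‖ ≤ s}) :=
  ⟨1, fun y hy => (qmod_mem_bounds hxbar s y hy).2⟩

lemma qmod_set_nonempty {s : ℝ} (hs : 0 ≤ s) :
    ((fun ξ => Metric.infDist (xbar + ξ) S / ‖ξ‖) ''
    {ξ | ξ ∈ clarkeTangentCone S xbar ∧ ‖ξ‖ ≤ s}).Nonempty :=
  ⟨_, Set.mem_image_of_mem _ ⟨zero_mem_cone S xbar, by simpa using hs⟩⟩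

lemma qmod_nonneg (hxbar : xbar ∈ S) (s : ℝ) : 0 ≤ qmod S xbar s := by
  rcases le_or_gt 0 s with hs | hs
  · have h0 : (0:ℝ) ∈ (fun ξ => Metric.infDist (xbar + ξ) S / ‖ξ‖) ''
        {ξ | ξ ∈ clarkeTangentCone S xbar ∧ ‖ξ‖ ≤ s} := by
      refine ⟨0, ⟨zero_mem_cone S xbar, by simpa using hs⟩, by simp⟩
    exact le_csSup (qmod_bddAbove hxbar s) h0
  · have : {ξ | ξ ∈ clarkeTangentCone S xbar ∧ ‖ξ‖ ≤ s} = ∅ := by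
      ext ξ; simp only [Set.mem_setOf_eq, Set.mem_empty_iff_false, iff_false]
      rintro ⟨-, h⟩
      exact absurd (lt_of_le_of_lt h hs) (not_lt.2 (norm_nonneg ξ))
    rw [qmod, this]
    simp [Real.sSup_empty]

lemma qmod_key (hxbar : xbar ∈ S) {ξ : Euc n} (hξ : ξ ∈ clarkeTangentCone S xbar) :
    Metric.infDist (xbar + ξ) S ≤ ‖ξ‖ * qmod S xbar ‖ξ‖ := by
  rcases eq_or_ne ξ 0 with rfl | hne
  · simp [Metric.infDist_zero_of_mem hxbar]
  have hpos : 0 < ‖ξ‖ := norm_pos_iff.2 hne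
  have hmem : Metric.infDist (xbar + ξ) S / ‖ξ‖ ∈
      (fun ξ' => Metric.infDist (xbar + ξ') S / ‖ξ'‖) ''
      {ξ' | ξ' ∈ clarkeTangentCone S xbar ∧ ‖ξ'‖ ≤ ‖ξ‖} :=
    Set.mem_image_of_mem _ ⟨hξ, le_rfl⟩
  have := le_csSup (qmod_bddAbove hxbar ‖ξ‖) hmem
  rw [div_le_iff₀ hpos] at this
  calc Metric.infDist (xbar + ξ) S ≤ qmod S xbar ‖ξ‖ * ‖ξ‖ := this
    _ = ‖ξ‖ * qmod S xbar ‖ξ‖ := mul_comm _ _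

lemma qmod_mono (hxbar : xbar ∈ S) : MonotoneOn (qmod S xbar) (Set.Ici 0) := by
  intro s hs s' hs' hss
  apply csSup_le_csSup (qmod_bddAbove hxbar s') (qmod_set_nonempty hs)
  apply Set.image_mono
  intro ξ hξ
  exact ⟨hξ.1, hξ.2.trans hss⟩

lemma qmod_zero (hxbar : xbar ∈ S) : qmod S xbar 0 = 0 := by
  apply le_antisymm
  · apply csSup_le (qmod_set_nonempty le_rfl)
    rintro y ⟨ξ, ⟨-, hξn⟩, rfl⟩
    have : ξ = 0 := by
      rwa [← norm_le_zero_iff]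
    simp [this]
  · exact qmod_nonneg hxbar 0

lemma qmod_le_of_uniform (hxbar : xbar ∈ S) {ε s₀ : ℝ} (hε : 0 ≤ ε) (hs₀ : 0 < s₀)
    (h : ∀ ξ ∈ clarkeTangentCone S xbar, ‖ξ‖ ≤ s₀ → Metric.infDist (xbar + ξ) S ≤ ε * ‖ξ‖) :
    qmod S xbar s₀ ≤ ε := by
  apply csSup_le (qmod_set_nonempty hs₀.le)
  rintro y ⟨ξ, ⟨hξT, hξn⟩, rfl⟩
  rcases eq_or_ne ξ 0 with rfl | hne
  · simpa using hε
  · have hpos : 0 < ‖ξ‖ := norm_pos_iff.2 hne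
    rw [div_le_iff₀ hpos]
    calc Metric.infDist (xbar + ξ) S ≤ ε * ‖ξ‖ := h ξ hξT hξn
      _ = ε * ‖ξ‖ := rfl

lemma qmod_tendsto (hxbar : xbar ∈ S) : Filter.Tendsto (qmod S xbar) (nhdsWithin 0 (Set.Ioi 0)) (nhds 0) := by
  rw [Metric.tendsto_nhds]
  intro ε hε
  obtain ⟨s₀, hs₀, hunif⟩ := uniform_est hxbar (ε/2) (half_pos hε)
  have hq : qmod S xbar s₀ ≤ ε/2 := qmod_le_of_uniform hxbar (by linarith) hs₀ hunif
  have hIoc : Set.Ioc (0:ℝ) s₀ ∈ nhdsWithin (0:ℝ) (Set.Ioi 0) :=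
    Ioc_mem_nhdsGT hs₀
  filter_upwards [hIoc] with s hs
  rw [Real.dist_eq, sub_zero, abs_of_nonneg (qmod_nonneg hxbar s)]
  have : qmod S xbar s ≤ qmod S xbar s₀ :=
    qmod_mono hxbar (Set.mem_Ici.2 hs.1.le) (Set.mem_Ici.2 hs₀.le) hs.2
  linarith

lemma qmod_isModulus (hxbar : xbar ∈ S) : (∀ s, 0 ≤ qmod S xbar s) ∧ MonotoneOn (qmod S xbar) (Set.Ici 0) ∧
    qmod S xbar 0 = 0 ∧
    Filter.Tendsto (qmod S xbar) (nhdsWithin (0:ℝ) (Set.Ioi 0)) (nhds 0) :=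
  ⟨qmod_nonneg hxbar, qmod_mono hxbar, qmod_zero hxbar, qmod_tendsto hxbar⟩

end qmod

/-- hypomonotonicity inequality for prox-regular sets. -/
lemma hypo {r : ℝ} {S' : Set (Euc n)} (hpr : IsProxRegular r S') (hr : 0 < r)
    {p z y : Euc n} (hp : p ∈ projSet S' z) (hy : y ∈ S') :
    inner ℝ (z - p) (y - p) ≤ dist z p * ‖y - p‖^2 / (2*r) := by
  rcases eq_or_ne z p with rfl | hzp
  · simp
  have hd : 0 < dist z p := dist_pos.2 hzp
  set d := dist z p with hdd
  set η : Euc n := d⁻¹ • (z - p) with hη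
  have hznorm : ‖z - p‖ = d := by rw [hdd, dist_eq_norm]
  have hηnorm : ‖η‖ = 1 := by
    rw [hη, norm_smul, Real.norm_eq_abs, abs_of_pos (inv_pos.2 hd), hznorm]
    field_simp
  have hdη : d • η = z - p := by
    rw [hη, smul_smul, mul_inv_cancel₀ hd.ne', one_smul]
  have hηN : η ∈ proxNormalCone S' p := by
    refine ⟨d, hd, ?_⟩
    have : p + d • η = z := by rw [hdη]; abel
    rw [this]
    exact hp
  have hreg := hpr p hp.1 η hηN hηnorm r hr le_rfl
  have hrle : r ≤ ‖p + r • η - y‖ := by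
    have h1 : dist (p + r • η) p = r := by
      rw [dist_eq_norm]
      simp [norm_smul, Real.norm_eq_abs, abs_of_pos hr, hηnorm]
    have h2 : Metric.infDist (p + r • η) S' ≤ dist (p + r • η) y :=
      Metric.infDist_le_dist_of_mem hy
    rw [dist_eq_norm] at h2
    calc r = dist (p + r • η) p := h1.symm
      _ = Metric.infDist (p + r • η) S' := hreg.2
      _ ≤ ‖p + r • η - y‖ := h2
  have hsq : r^2 ≤ ‖(p - y) + r • η‖^2 := by
    have : p + r • η - y = (p - y) + r • η := by abel
    rw [this] at hrle
    nlinarith [norm_nonneg ((p - y) + r • η)]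
  rw [norm_add_sq_real] at hsq
  have hinner : (inner ℝ (p - y) (r • η) : ℝ) = r * inner ℝ (p - y) η := real_inner_smul_right _ _ r
  have hnr : ‖r • η‖^2 = r^2 := by
    rw [norm_smul, Real.norm_eq_abs, abs_of_pos hr, hηnorm]; ring
  rw [hinner, hnr] at hsq
  -- hsq : r^2 ≤ ‖p - y‖^2 + 2*(r * inner ℝ (p-y) η) + r^2
  have hkey : (inner ℝ η (y - p) : ℝ) ≤ ‖y - p‖^2 / (2*r) := by
    have h1 : (inner ℝ (p - y) η : ℝ) = -(inner ℝ η (y - p) : ℝ) := by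
      rw [real_inner_comm]
      have : p - y = -(y - p) := by abel
      rw [this, inner_neg_right]
    rw [h1] at hsq
    have h2 : ‖p - y‖ = ‖y - p‖ := norm_sub_rev _ _
    rw [h2] at hsq
    rw [le_div_iff₀ (by linarith : (0:ℝ) < 2*r)]
    nlinarith
  have hfinal : (inner ℝ (z - p) (y - p) : ℝ) = d * inner ℝ η (y - p) := by
    rw [← hdη, real_inner_smul_left]
  rw [hfinal]
  rw [div_eq_mul_inv, mul_assoc, ← div_eq_mul_inv]
  calc d * (inner ℝ η (y - p) : ℝ) ≤ d * (‖y - p‖^2 / (2*r)) :=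
    mul_le_mul_of_nonneg_left hkey hd.le
    _ = d * (‖y - p‖^2 / (2*r)) := rfl

/-- Lipschitz estimate for projections onto a prox-regular set. -/
lemma lip {r : ℝ} {S' : Set (Euc n)} (hpr : IsProxRegular r S') (hr : 0 < r)
    {z₁ z₂ p₁ p₂ : Euc n} (h₁ : p₁ ∈ projSet S' z₁) (h₂ : p₂ ∈ projSet S' z₂)
    (hd₁ : dist z₁ p₁ ≤ r/2) (hd₂ : dist z₂ p₂ ≤ r/2) :
    ‖p₁ - p₂‖ ≤ 2 * ‖z₁ - z₂‖ := by
  have hA := hypo hpr hr h₁ h₂.1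
  have hB := hypo hpr hr h₂ h₁.1
  set c := ‖p₂ - p₁‖ with hc
  have hc' : ‖p₁ - p₂‖ = c := norm_sub_rev _ _
  rw [hc'] at hB ⊢
  have h2r : (0:ℝ) < 2*r := by linarith
  have hA' : (inner ℝ (z₁ - p₁) (p₂ - p₁) : ℝ) * (2*r) ≤ dist z₁ p₁ * c^2 := by
    calc (inner ℝ (z₁ - p₁) (p₂ - p₁) : ℝ) * (2*r) ≤ (dist z₁ p₁ * c^2 / (2*r)) * (2*r) :=
          mul_le_mul_of_nonneg_right hA h2r.le
      _ = dist z₁ p₁ * c^2 := by field_simp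
  have hB' : (inner ℝ (z₂ - p₂) (p₁ - p₂) : ℝ) * (2*r) ≤ dist z₂ p₂ * c^2 := by
    calc (inner ℝ (z₂ - p₂) (p₁ - p₂) : ℝ) * (2*r) ≤ (dist z₂ p₂ * c^2 / (2*r)) * (2*r) :=
          mul_le_mul_of_nonneg_right hB h2r.le
      _ = dist z₂ p₂ * c^2 := by field_simp
  have hcsq : (inner ℝ (p₂ - p₁) (p₂ - p₁) : ℝ) = c^2 := by
    rw [real_inner_self_eq_norm_sq]
  have hexp : (inner ℝ (z₁ - p₁) (p₂ - p₁) : ℝ) + inner ℝ (z₂ - p₂) (p₁ - p₂)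
      = inner ℝ (z₁ - z₂) (p₂ - p₁) + c^2 := by
    rw [← hcsq]
    have e3 : z₂ - p₂ = -(p₂ - z₂) := by abel
    have e2 : p₁ - p₂ = -(p₂ - p₁) := by abel
    rw [e3, e2, inner_neg_neg, ← inner_add_left, ← inner_add_left]
    congr 1
    abel
  have hCS : (inner ℝ (z₁ - z₂) (p₂ - p₁) : ℝ) ≤ ‖z₁ - z₂‖ * c :=
    real_inner_le_norm _ _
  have hcnn : 0 ≤ c := norm_nonneg _
  have hprod : 0 ≤ (r - (dist z₁ p₁ + dist z₂ p₂)) * c^2 :=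
    mul_nonneg (by linarith) (sq_nonneg c)
  have hexp2 : ((inner ℝ (z₁ - p₁) (p₂ - p₁) : ℝ) + inner ℝ (z₂ - p₂) (p₁ - p₂)) * (2*r)
      = ((inner ℝ (z₁ - z₂) (p₂ - p₁) : ℝ) + c^2) * (2*r) := by rw [hexp]
  have hCS3 : -(inner ℝ (z₁ - z₂) (p₂ - p₁) : ℝ) ≤ ‖z₁ - z₂‖ * c := by
    have h7 := real_inner_le_norm (z₂ - z₁) (p₂ - p₁)
    have e : z₂ - z₁ = -(z₁ - z₂) := by abel
    rw [e, inner_neg_left, norm_neg] at h7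
    exact h7
  have hCS4 : (-(inner ℝ (z₁ - z₂) (p₂ - p₁) : ℝ)) * (2*r) ≤ (‖z₁ - z₂‖ * c) * (2*r) :=
    mul_le_mul_of_nonneg_right hCS3 h2r.le
  have h5 : r * c^2 ≤ 2*r*(‖z₁ - z₂‖ * c) := by nlinarith [hA', hB', hexp2, hCS4, hprod]
  rcases eq_or_lt_of_le hcnn with h0 | hcpos
  · rw [← h0]; positivity
  · have h6 : (r*c) * c ≤ (r*c) * (2 * ‖z₁ - z₂‖) := by nlinarith [h5]
    exact le_of_mul_le_mul_left h6 (mul_pos hr hcpos)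

/-- the projection point. -/
def Pj (S' : Set (Euc n)) (hcl : IsClosed S') (hne : S'.Nonempty) (z : Euc n) : Euc n :=
  (hcl.exists_infDist_eq_dist hne z).choose

lemma Pj_mem (S' : Set (Euc n)) (hcl : IsClosed S') (hne : S'.Nonempty) (z : Euc n) :
    Pj S' hcl hne z ∈ projSet S' z := by
  obtain ⟨h1, h2⟩ := (hcl.exists_infDist_eq_dist hne z).choose_spec
  exact ⟨h1, h2.symm⟩

end Stmt9Aux

/-- Theorem 3.1: if a nonempty closed `S ⊆ ℝⁿ` is Quasi Prox-Regular
at `xbar ∈ S`, then the Clarke tangent cone `T^C_S(xbar)` is a QDQ approximating cone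
to `S` at `xbar`. -/
theorem stmt9 {n : ℕ} (S : Set (Euc n)) (hne : S.Nonempty) (hcl : IsClosed S)
    (xbar : Euc n) (hxbar : xbar ∈ S) (hqpr : QuasiProxRegularAt S xbar) :
    IsQDQApproxCone (clarkeTangentCone S xbar) S xbar := by
  classical
  obtain ⟨δ₀, hδ₀, hcase⟩ := hqpr
  refine ⟨Stmt9Aux.convex_cone hxbar, n, (fun _ => S), clarkeTangentCone S xbar,
    ContinuousLinearMap.id ℝ (Euc n), Stmt9Aux.convex_cone hxbar,
    (fun a ha ξ hξ => Stmt9Aux.smul_mem_cone hxbar ha hξ), ?_,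
    (fun ξ _ => subset_rfl), by simp⟩
  refine ⟨isCompact_singleton, ?_⟩
  rcases hcase with hsub | ⟨r, hr, S', hS'ne, hS'cl, hS'pr, hS'eq⟩
  · -- case (i) : the cone is locally contained in S
    refine ⟨fun _ => 0, ⟨fun _ => le_rfl, fun _ _ _ _ _ => le_rfl, rfl, tendsto_const_nhds⟩,
      δ₀, hδ₀, fun δ hδpos hδle => ?_⟩
    refine ⟨fun _ => ContinuousLinearMap.id ℝ (Euc n), fun _ => 0, continuousOn_const,
      fun ξ hξ => ?_⟩
    obtain ⟨hξball, hξT⟩ := hξ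
    have hξn : ‖ξ‖ < δ := by simpa [dist_zero_right] using Metric.mem_ball.1 hξball
    refine ⟨?_, ⟨ContinuousLinearMap.id ℝ (Euc n), rfl, by rw [sub_self, norm_zero]⟩, by simp⟩
    have hmem : xbar + ξ ∈
        ({x | ∃ v ∈ clarkeTangentCone S xbar, x = xbar + v} ∩ Metric.ball xbar δ₀) := by
      refine ⟨⟨ξ, hξT, rfl⟩, ?_⟩
      rw [Metric.mem_ball, dist_eq_norm]
      simpa using lt_of_lt_of_le hξn hδle
    have := hsub hmem
    simpa using this
  · -- case (ii) : prox-regular case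
    have hxbar' : xbar ∈ S' := by
      have h1 : xbar ∈ S ∩ Metric.ball xbar δ₀ := ⟨hxbar, Metric.mem_ball_self hδ₀⟩
      rw [hS'eq] at h1
      exact h1.1
    set δbar := min (δ₀/4) (r/4) with hδbar
    have hδbarpos : 0 < δbar := lt_min (by linarith) (by linarith)
    refine ⟨Stmt9Aux.qmod S xbar,
      ⟨Stmt9Aux.qmod_nonneg hxbar, Stmt9Aux.qmod_mono hxbar,
        Stmt9Aux.qmod_zero hxbar, Stmt9Aux.qmod_tendsto hxbar⟩,
      δbar, hδbarpos, fun δ hδpos hδle => ?_⟩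
    set P := Stmt9Aux.Pj S' hS'cl hS'ne with hP
    -- basic facts for points in the domain
    have key : ∀ ξ : Euc n, ξ ∈ Metric.ball (0 : Euc n) δ ∩ clarkeTangentCone S xbar →
        dist (xbar + ξ) (P (xbar + ξ)) ≤ r/2 ∧ P (xbar + ξ) ∈ S ∧
        Metric.infDist (xbar + ξ) S' ≤ Metric.infDist (xbar + ξ) S ∧ ‖ξ‖ < δ := by
      intro ξ hξ
      obtain ⟨hξball, hξT⟩ := hξ
      have hξn : ‖ξ‖ < δ := by simpa [dist_zero_right] using Metric.mem_ball.1 hξball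
      set z := xbar + ξ with hz
      have hzx : dist z xbar = ‖ξ‖ := by rw [dist_eq_norm]; simp [hz]
      have hz4 : dist z xbar < δ₀/4 := by
        rw [hzx]
        exact lt_of_lt_of_le hξn (hδle.trans (min_le_left _ _))
      have hzr : dist z xbar < r/4 := by
        rw [hzx]
        exact lt_of_lt_of_le hξn (hδle.trans (min_le_right _ _))
      have hPmem := Stmt9Aux.Pj_mem S' hS'cl hS'ne z
      have hdzP : dist z (P z) = Metric.infDist z S' := hPmem.2
      have hle1 : Metric.infDist z S' ≤ dist z xbar := Metric.infDist_le_dist_of_mem hxbar'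
      have hdzP2 : dist z (P z) ≤ r/2 := by rw [hdzP]; linarith
      have hPS : P z ∈ S := by
        have hPx : dist (P z) xbar ≤ 2 * dist z xbar := by
          calc dist (P z) xbar ≤ dist (P z) z + dist z xbar := dist_triangle _ _ _
            _ ≤ 2 * dist z xbar := by
              rw [dist_comm (P z) z]
              linarith [hdzP.le.trans hle1]
        have hmem2 : P z ∈ S' ∩ Metric.ball xbar δ₀ := by
          refine ⟨hPmem.1, Metric.mem_ball.2 ?_⟩
          linarith
        rw [← hS'eq] at hmem2
        exact hmem2.1
      have hE1 : Metric.infDist z S' ≤ Metric.infDist z S := by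
        obtain ⟨q, hqS, hq⟩ := hcl.exists_infDist_eq_dist hne z
        have hq1 : dist z q ≤ dist z xbar := by
          rw [← hq]
          exact Metric.infDist_le_dist_of_mem hxbar
        have hq2 : dist q xbar ≤ 2 * dist z xbar := by
          calc dist q xbar ≤ dist q z + dist z xbar := dist_triangle _ _ _
            _ ≤ 2 * dist z xbar := by rw [dist_comm q z]; linarith
        have hqmem : q ∈ S ∩ Metric.ball xbar δ₀ := ⟨hqS, Metric.mem_ball.2 (by linarith)⟩
        rw [hS'eq] at hqmem
        calc Metric.infDist z S' ≤ dist z q := Metric.infDist_le_dist_of_mem hqmem.1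
          _ = Metric.infDist z S := hq.symm
      exact ⟨hdzP2, hPS, hE1, hξn⟩
    refine ⟨fun _ => ContinuousLinearMap.id ℝ (Euc n),
      fun ξ => P (xbar + ξ) - (xbar + ξ), ?_, fun ξ hξ => ?_⟩
    · -- continuity
      apply ContinuousOn.prodMk continuousOn_const
      have hlip : ∀ ξ ∈ Metric.ball (0 : Euc n) δ ∩ clarkeTangentCone S xbar,
          ∀ ξ' ∈ Metric.ball (0 : Euc n) δ ∩ clarkeTangentCone S xbar,
          dist (P (xbar + ξ) - (xbar + ξ)) (P (xbar + ξ') - (xbar + ξ')) ≤ 3 * dist ξ ξ' := by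
        intro ξ hξ ξ' hξ'
        obtain ⟨hd1, -, -, -⟩ := key ξ hξ
        obtain ⟨hd2, -, -, -⟩ := key ξ' hξ'
        have hlipP := Stmt9Aux.lip hS'pr hr (Stmt9Aux.Pj_mem S' hS'cl hS'ne (xbar + ξ))
          (Stmt9Aux.Pj_mem S' hS'cl hS'ne (xbar + ξ')) hd1 hd2
        have hzz : ‖(xbar + ξ) - (xbar + ξ')‖ = ‖ξ - ξ'‖ := by
          congr 1; abel
        rw [dist_eq_norm, dist_eq_norm]
        calc ‖(P (xbar + ξ) - (xbar + ξ)) - (P (xbar + ξ') - (xbar + ξ'))‖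
            ≤ ‖P (xbar + ξ) - P (xbar + ξ')‖ + ‖(xbar + ξ) - (xbar + ξ')‖ := by
              have : (P (xbar + ξ) - (xbar + ξ)) - (P (xbar + ξ') - (xbar + ξ'))
                  = (P (xbar + ξ) - P (xbar + ξ')) - ((xbar + ξ) - (xbar + ξ')) := by abel
              rw [this]
              exact norm_sub_le _ _
          _ ≤ 2 * ‖(xbar + ξ) - (xbar + ξ')‖ + ‖(xbar + ξ) - (xbar + ξ')‖ :=
              add_le_add_left hlipP _
          _ = 3 * ‖ξ - ξ'‖ := by rw [hzz]; ring
      exact (LipschitzOnWith.of_dist_le_mul (K := 3) (by exact_mod_cast hlip)).continuousOn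
    · -- the three conditions
      obtain ⟨-, hPS, hE1, hξn⟩ := key ξ hξ
      have hξT := hξ.2
      have hmem : xbar + (ContinuousLinearMap.id ℝ (Euc n)) (ξ - 0) +
          (P (xbar + ξ) - (xbar + ξ)) = P (xbar + ξ) := by
        simp only [ContinuousLinearMap.id_apply, sub_zero]
        abel
      refine ⟨by rw [hmem]; exact hPS,
        ⟨ContinuousLinearMap.id ℝ (Euc n), rfl, by rw [sub_self, norm_zero]; exact Stmt9Aux.qmod_nonneg hxbar δ⟩, ?_⟩
      have hnorm : ‖P (xbar + ξ) - (xbar + ξ)‖ = Metric.infDist (xbar + ξ) S' := by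
        rw [← (Stmt9Aux.Pj_mem S' hS'cl hS'ne (xbar + ξ)).2, dist_eq_norm, norm_sub_rev]
      rw [hnorm]
      have hb1 : Metric.infDist (xbar + ξ) S ≤ ‖ξ‖ * Stmt9Aux.qmod S xbar ‖ξ‖ :=
        Stmt9Aux.qmod_key hxbar hξT
      have hb2 : Stmt9Aux.qmod S xbar ‖ξ‖ ≤ Stmt9Aux.qmod S xbar δ :=
        Stmt9Aux.qmod_mono hxbar (Set.mem_Ici.2 (norm_nonneg ξ)) (Set.mem_Ici.2 hδpos.le) hξn.le
      calc Metric.infDist (xbar + ξ) S' ≤ Metric.infDist (xbar + ξ) S := hE1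
        _ ≤ ‖ξ‖ * Stmt9Aux.qmod S xbar ‖ξ‖ := hb1
        _ ≤ δ * Stmt9Aux.qmod S xbar δ := by
            apply mul_le_mul hξn.le hb2 (Stmt9Aux.qmod_nonneg hxbar ‖ξ‖) hδpos.le
end
end

section
/- Let r > 0 and let S ⊆ ℝⁿ be an r-prox-regular set with 0 ∈ S, so that the metric projection Π_S is single-valued on {x : d_S(x) < r}. Then (1/δ)·sup{ |Π_S(x) − x| : x ∈ cl(B_δ) ∩ T^C_S(0) } → 0 as δ → 0⁺, where cl(B_δ) is the closed ball of radius δ centered at 0. -/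
open Metric Set Filter

noncomputable section

/-- Extraction lemma: if `v` is in the Clarke tangent cone at `0 ∈ S`, then
`d_S(t v) < ε t` for all small `t > 0`. -/
lemma lemA {n : ℕ} {S : Set (Euc n)} (h0 : (0 : Euc n) ∈ S) {v : Euc n}
    (hv : v ∈ clarkeTangentCone S 0) {ε : ℝ} (hε : 0 < ε) :
    ∃ τ > (0:ℝ), ∀ t : ℝ, 0 < t → t < τ → Metric.infDist (t • v) S < ε * t := by
  set F := (nhdsWithin (0 : ℝ) (Set.Ioi 0)) ×ˢ (nhds (0 : Euc n)) with hF
  set f := fun q : ℝ × Euc n =>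
      (Metric.infDist (q.2 + q.1 • v) S - Metric.infDist q.2 S) / q.1 with hf
  have hpos : ∀ᶠ q : ℝ × Euc n in F, 0 < q.1 :=
    Filter.Eventually.prod_inl (eventually_mem_nhdsWithin) _
  have hbdd : Filter.IsBoundedUnder (· ≤ ·) F f := by
    apply Filter.isBoundedUnder_of_eventually_le (a := ‖v‖)
    filter_upwards [hpos] with q hq
    have h1 : Metric.infDist (q.2 + q.1 • v) S ≤ Metric.infDist q.2 S + dist (q.2 + q.1 • v) q.2 :=
      Metric.infDist_le_infDist_add_dist
    have h2 : dist (q.2 + q.1 • v) q.2 = q.1 * ‖v‖ := by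
      rw [dist_eq_norm, add_sub_cancel_left, norm_smul, Real.norm_eq_abs, abs_of_pos hq]
    rw [hf]
    rw [div_le_iff₀ hq]
    nlinarith [h1, h2]
  have hlt : ∀ᶠ q in F, f q < ε := by
    apply Filter.eventually_lt_of_limsup_lt _ hbdd
    rw [hv]; exact hε
  rw [hF] at hlt
  obtain ⟨p, hp, q, hq, himp⟩ := Filter.eventually_prod_iff.mp hlt
  obtain ⟨τ, hτ, hsub⟩ := mem_nhdsGT_iff_exists_Ioo_subset.mp hp
  refine ⟨τ, hτ, fun t ht htτ => ?_⟩
  have hq0 : q 0 := hq.self_of_nhds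
  have := himp (hsub ⟨ht, htτ⟩) hq0
  rw [hf] at this
  simp only [zero_add, Metric.infDist_zero_of_mem h0, sub_zero] at this
  rw [div_lt_iff₀ ht] at this
  linarith

/-- Uniform estimate over the Clarke tangent cone. -/
lemma key {n : ℕ} {S : Set (Euc n)} (h0 : (0 : Euc n) ∈ S) {ε : ℝ} (hε : 0 < ε) :
    ∃ δ₀ > (0:ℝ), ∀ x ∈ clarkeTangentCone S 0, ‖x‖ ≤ δ₀ →
      Metric.infDist x S ≤ ε * ‖x‖ := by
  by_contra hcon
  push_neg at hcon
  -- build a sequence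
  have hseq : ∀ k : ℕ, ∃ x ∈ clarkeTangentCone S 0,
      ‖x‖ ≤ 1 / (k + 1) ∧ ε * ‖x‖ < Metric.infDist x S := by
    intro k
    obtain ⟨x, hx1, hx2, hx3⟩ := hcon (1 / (k + 1)) (by positivity)
    exact ⟨x, hx1, hx2, hx3⟩
  choose x hxT hxn hxd using hseq
  have hx0 : ∀ k, x k ≠ 0 := by
    intro k h
    have := hxd k
    rw [h] at this
    simp [Metric.infDist_zero_of_mem h0] at this
  set v := fun k => ‖x k‖⁻¹ • x k with hvdef
  have hvs : ∀ k, v k ∈ Metric.sphere (0 : Euc n) 1 := by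
    intro k
    simp only [mem_sphere_iff_norm, sub_zero, hvdef, norm_smul, norm_inv, norm_norm]
    rw [inv_mul_cancel₀ (norm_ne_zero_iff.mpr (hx0 k))]
  obtain ⟨w, hw, φ, hφ, hconv⟩ :=
    (isCompact_sphere (0 : Euc n) 1).tendsto_subseq hvs
  -- pick k₀ with v (φ k₀) close to w
  have h8 : (0:ℝ) < ε / 8 := by linarith
  obtain ⟨k₀, hk₀⟩ := Metric.tendsto_atTop.mp hconv (ε / 8) h8
  have hvk₀ : dist (v (φ k₀)) w < ε / 8 := hk₀ k₀ le_rfl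
  set s := ‖x (φ k₀)‖ with hs
  have hspos : 0 < s := norm_pos_iff.mpr (hx0 (φ k₀))
  -- apply lemA to x (φ k₀)
  obtain ⟨τ, hτ, hA⟩ := lemA h0 (hxT (φ k₀)) (ε := ε * s / 4) (by positivity)
  -- pick k large
  have htend : Filter.Tendsto (fun k => ‖x (φ k)‖) Filter.atTop (nhds 0) := by
    apply squeeze_zero (fun k => norm_nonneg _) (fun k => hxn (φ k))
    apply Filter.Tendsto.comp (f := fun k : ℕ => (φ k : ℕ))
      (g := fun k : ℕ => 1 / ((k : ℝ) + 1))
    · exact tendsto_one_div_add_atTop_nhds_zero_nat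
    · exact hφ.tendsto_atTop
  obtain ⟨K, hK⟩ := Metric.tendsto_atTop.mp htend (s * τ) (by positivity)
  obtain ⟨K', hK'⟩ := Metric.tendsto_atTop.mp hconv (ε / 8) h8
  set k := max K (max K' k₀) with hk
  have htk : ‖x (φ k)‖ < s * τ := by
    have := hK k (le_max_left _ _)
    rwa [Real.dist_eq, sub_zero, abs_of_nonneg (norm_nonneg _)] at this
  have hvk : dist (v (φ k)) w < ε / 8 := hK' k (le_trans (le_max_left _ _) (le_max_right _ _))
  set t := ‖x (φ k)‖ with ht
  have htpos : 0 < t := norm_pos_iff.mpr (hx0 (φ k))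
  -- d(x (φ k)) estimate
  have hxeq : x (φ k) = t • v (φ k) := by
    rw [hvdef]
    rw [smul_smul, ht, mul_inv_cancel₀ (norm_ne_zero_iff.mpr (hx0 (φ k))), one_smul]
  have hlip : Metric.infDist (x (φ k)) S ≤
      Metric.infDist ((t / s) • x (φ k₀)) S + t * (ε / 4) := by
    have h1 : Metric.infDist (x (φ k)) S ≤
        Metric.infDist ((t / s) • x (φ k₀)) S + dist (x (φ k)) ((t / s) • x (φ k₀)) :=
      Metric.infDist_le_infDist_add_dist
    have h2 : (t / s) • x (φ k₀) = t • v (φ k₀) := by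
      rw [hvdef, smul_smul, hs, div_eq_mul_inv]
    have h3 : dist (x (φ k)) ((t / s) • x (φ k₀)) ≤ t * (ε / 4) := by
      rw [h2, hxeq, dist_smul₀, Real.norm_eq_abs, abs_of_pos htpos]
      have : dist (v (φ k)) (v (φ k₀)) ≤ dist (v (φ k)) w + dist w (v (φ k₀)) :=
        dist_triangle _ _ _
      rw [dist_comm w] at this
      have hd : dist (v (φ k)) (v (φ k₀)) ≤ ε / 4 := by linarith [hvk, hvk₀]
      exact mul_le_mul_of_nonneg_left hd htpos.le
    linarith
  have hAk : Metric.infDist ((t / s) • x (φ k₀)) S < (ε * s / 4) * (t / s) := by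
    apply hA (t / s) (by positivity)
    rw [div_lt_iff₀ hspos]
    calc t < s * τ := htk
    _ = τ * s := mul_comm _ _
  have heq : (ε * s / 4) * (t / s) = ε / 4 * t := by
    field_simp
  have hcontr : Metric.infDist (x (φ k)) S < ε * t := by
    rw [heq] at hAk
    nlinarith [mul_pos hε htpos]
  have := hxd (φ k)
  rw [← ht] at this
  linarith

/-- if `S` is `r`-prox-regular and `0 ∈ S`, then
`(1/δ)·sup{ |Π_S(x) − x| : x ∈ cl(B_δ) ∩ T^C_S(0) } → 0` as `δ → 0⁺`. -/
theorem stmt12 {n : ℕ} (S : Set (Euc n)) (hne : S.Nonempty) (hcl : IsClosed S)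
    (r : ℝ) (hr : 0 < r) (hpr : IsProxRegular r S) (h0 : (0 : Euc n) ∈ S) :
    Filter.Tendsto
      (fun δ : ℝ => (1 / δ) *
        sSup {d : ℝ | ∃ x ∈ Metric.closedBall (0 : Euc n) δ ∩ clarkeTangentCone S 0,
          ∃ y ∈ projSet S x, d = dist y x})
      (nhdsWithin (0 : ℝ) (Set.Ioi 0)) (nhds 0) := by
  rw [Metric.tendsto_nhdsWithin_nhds]
  intro ε hε
  obtain ⟨δ₀, hδ₀, hkey⟩ := key h0 (half_pos hε)
  refine ⟨δ₀, hδ₀, fun {δ} hδ hdist => ?_⟩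
  have hδpos : (0:ℝ) < δ := hδ
  have hδlt : δ < δ₀ := by
    rwa [Real.dist_eq, sub_zero, abs_of_pos hδpos] at hdist
  set A := {d : ℝ | ∃ x ∈ Metric.closedBall (0 : Euc n) δ ∩ clarkeTangentCone S 0,
      ∃ y ∈ projSet S x, d = dist y x} with hA
  have hub : ∀ d ∈ A, d ≤ ε / 2 * δ := by
    rintro d ⟨x, ⟨hxb, hxT⟩, y, hy, rfl⟩
    have hval : dist y x = Metric.infDist x S := by
      rw [dist_comm]; exact hy.2
    have hn : ‖x‖ ≤ δ := by
      rw [Metric.mem_closedBall, dist_comm, dist_zero_left] at hxb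
      exact hxb
    have h1 : Metric.infDist x S ≤ ε / 2 * ‖x‖ := hkey x hxT (le_trans hn hδlt.le)
    rw [hval]
    calc Metric.infDist x S ≤ ε / 2 * ‖x‖ := h1
      _ ≤ ε / 2 * δ := by
          apply mul_le_mul_of_nonneg_left hn (by positivity)
  have hnn : 0 ≤ sSup A := by
    apply Real.sSup_nonneg
    rintro d ⟨x, _, y, _, rfl⟩
    exact dist_nonneg
  have hle : sSup A ≤ ε / 2 * δ := Real.sSup_le hub (by positivity)
  rw [Real.dist_eq, sub_zero]
  have hfn : 0 ≤ 1 / δ * sSup A := by positivity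
  rw [abs_of_nonneg hfn]
  have : 1 / δ * sSup A ≤ ε / 2 := by
    rw [div_mul_eq_mul_div, mul_comm, ← div_mul_eq_mul_div]
    calc sSup A / δ * 1 = sSup A / δ := mul_one _
      _ ≤ (ε / 2 * δ) / δ := by apply div_le_div_of_nonneg_right hle hδpos.le
      _ = ε / 2 := by field_simp
  linarith
end
end

section
/- Let ẑ = (Ŝ, ŵ⁰, ŵ, ŷ⁰, ŷ, β̂) be a feasible extended process. The following are equivalent: (i) there is a local infimum gap at ẑ; (ii) ẑ is isolated; (iii) there exists r̂ > 0 such that inf{Φ(y⁰, y) : (y⁰, y, β) ∈ R^r_{W₊}(ẑ) ∩ (𝔗×[0,K])} = +∞ for every continuous function Φ : ℝ×ℝⁿ → ℝ and every r ∈ (0, r̂]. -/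
open Metric Set Filter MeasureTheory
open scoped RealInnerProductSpace

noncomputable section

abbrev CVec (m₁ m₂ : ℕ) := EuclideanSpace ℝ (Fin m₁ ⊕ Fin m₂)

/-- The data and standing hypotheses of the unbounded/impulsive optimal control problem:
`C¹` bounded vector fields `f, g₁, …, g_m` (`m = m₁ + m₂`, indexed by `Fin m₁ ⊕ Fin m₂`),
a `C¹` cost `Ψ`, a closed control cone `𝒞 = 𝒞₁ × 𝒞₂` where `𝒞₁` contains the coordinate
lines and `𝒞₂` contains no line, a closed target `𝔗 ⊆ [0,∞) × ℝⁿ`, an initial state and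
an energy bound `K ∈ (0, +∞]`. -/
structure Setup (n m₁ m₂ : ℕ) where
  f : Euc n → Euc n
  g : (Fin m₁ ⊕ Fin m₂) → Euc n → Euc n
  Ψ : ℝ × Euc n → ℝ
  C1 : Set (Euc m₁)
  C2 : Set (Euc m₂)
  C : Set (CVec m₁ m₂)
  T : Set (ℝ × Euc n)
  x0 : Euc n
  K : EReal
  hm : 1 ≤ m₁ + m₂
  hf : ContDiff ℝ 1 f
  hf_bdd : ∃ M : ℝ, ∀ x, ‖f x‖ ≤ M ∧ ‖fderiv ℝ f x‖ ≤ M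
  hg : ∀ i, ContDiff ℝ 1 (g i)
  hg_bdd : ∀ i, ∃ M : ℝ, ∀ x, ‖g i x‖ ≤ M ∧ ‖fderiv ℝ (g i) x‖ ≤ M
  hΨ : ContDiff ℝ 1 Ψ
  hC1_closed : IsClosed C1
  hC1_cone : ∀ a : ℝ, 0 ≤ a → ∀ w ∈ C1, a • w ∈ C1
  hC1_lines : ∀ (i : Fin m₁) (t : ℝ), t • (EuclideanSpace.single i (1 : ℝ)) ∈ C1
  hC2_closed : IsClosed C2
  hC2_cone : ∀ a : ℝ, 0 ≤ a → ∀ w ∈ C2, a • w ∈ C2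
  hC2_noline : ∀ v : Euc m₂, v ≠ 0 → ¬ (∀ t : ℝ, t • v ∈ C2)
  hC_eq : C = {w : CVec m₁ m₂ |
      WithLp.toLp 2 (fun i : Fin m₁ => w (Sum.inl i)) ∈ C1 ∧
        WithLp.toLp 2 (fun i : Fin m₂ => w (Sum.inr i)) ∈ C2}
  hT_closed : IsClosed T
  hT_sub : T ⊆ Set.Ici (0 : ℝ) ×ˢ Set.univ
  hK : 0 < K

variable {n m₁ m₂ : ℕ}

/-- An extended process `(S, w⁰, w, y⁰, y, β)`: `S > 0`, the controls `(w⁰, w)` are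
measurable with `w⁰ ≥ 0`, `w ∈ 𝒞` and `w⁰ + |w| = 1` a.e. on `[0,S]`, while `(y⁰, y, β)`
is the (absolutely continuous) solution, in integral form, of
`dy⁰/ds = w⁰`, `dy/ds = f(y)w⁰ + Σᵢ gᵢ(y)wⁱ`, `dβ/ds = |w|`, with
`(y⁰, y, β)(0) = (0, x̌, 0)`. -/
structure ExtProcess (P : Setup n m₁ m₂) where
  S : ℝ
  w0 : ℝ → ℝ
  w : ℝ → CVec m₁ m₂
  y0 : ℝ → ℝ
  y : ℝ → Euc n
  β : ℝ → ℝ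
  hS : 0 < S
  hw0_meas : AEStronglyMeasurable w0 (volume.restrict (Set.Icc 0 S))
  hw_meas : AEStronglyMeasurable w (volume.restrict (Set.Icc 0 S))
  hw0_nonneg : ∀ᵐ s ∂(volume.restrict (Set.Icc 0 S)), 0 ≤ w0 s
  hw_mem : ∀ᵐ s ∂(volume.restrict (Set.Icc 0 S)), w s ∈ P.C
  hw_norm : ∀ᵐ s ∂(volume.restrict (Set.Icc 0 S)), w0 s + ‖w s‖ = 1
  hy_cont : ContinuousOn y (Set.Icc 0 S)
  hy0 : ∀ s ∈ Set.Icc 0 S, y0 s = ∫ t in (0 : ℝ)..s, w0 t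
  hy : ∀ s ∈ Set.Icc 0 S, y s = P.x0 +
    ∫ t in (0 : ℝ)..s, (w0 t • P.f (y t) + ∑ i : Fin m₁ ⊕ Fin m₂, w t i • P.g i (y t))
  hβ : ∀ s ∈ Set.Icc 0 S, β s = ∫ t in (0 : ℝ)..s, ‖w t‖

variable {P : Setup n m₁ m₂}

/-- The control distance `d(z₁, z₂) := |S₁ − S₂| + ‖(w₂⁰, w₂) − (w₁⁰, w₁)‖_{L¹([0, S₁∧S₂])}`. -/
def dproc (z₁ z₂ : ExtProcess P) : ℝ :=
  |z₁.S - z₂.S| +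
    ∫ s in Set.Icc 0 (min z₁.S z₂.S), (|z₁.w0 s - z₂.w0 s| + ‖z₁.w s - z₂.w s‖)

/-- The (time, state, energy) endpoint of an extended process. -/
def endpt (z : ExtProcess P) : ℝ × Euc n × ℝ := (z.y0 z.S, z.y z.S, z.β z.S)

/-- A feasible extended process: `(y⁰(S), y(S)) ∈ 𝔗` and `β(S) ≤ K`. -/
def Feasible (z : ExtProcess P) : Prop :=
  (z.y0 z.S, z.y z.S) ∈ P.T ∧ (z.β z.S : EReal) ≤ P.K

/-- An embedded strict-sense process: `w⁰ > 0` a.e. -/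
def StrictSense (z : ExtProcess P) : Prop :=
  ∀ᵐ s ∂(volume.restrict (Set.Icc 0 z.S)), 0 < z.w0 s

/-- The strict-sense reachable set of radius `r` around `ẑ`: endpoints `(y⁰, y, β)(S)` of
embedded strict-sense processes `z` with `d(z, ẑ) < r`. -/
def Reach (zh : ExtProcess P) (r : ℝ) : Set (ℝ × Euc n × ℝ) :=
  {e | ∃ z : ExtProcess P, StrictSense z ∧ dproc z zh < r ∧ e = endpt z}

/-- `R^r_{W₊}(ẑ) ∩ (𝔗 × [0,K])`: the feasible part of the strict-sense reachable set. -/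
def FeasReach (zh : ExtProcess P) (r : ℝ) : Set (ℝ × Euc n × ℝ) :=
  {e ∈ Reach zh r | (e.1, e.2.1) ∈ P.T ∧ (e.2.2 : EReal) ≤ P.K}

/-- There is a local infimum gap at the feasible extended process `ẑ`:
`Ψ(ŷ⁰(Ŝ), ŷ(Ŝ)) < inf { Ψ(y⁰, y) : (y⁰,y,β) ∈ R^r_{W₊}(ẑ) ∩ (𝔗×[0,K]) }` for some `r > 0`. -/
def HasLocalGap (zh : ExtProcess P) : Prop :=
  ∃ r > (0 : ℝ),
    ((P.Ψ (zh.y0 zh.S, zh.y zh.S) : ℝ) : EReal) <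
      ⨅ e ∈ FeasReach zh r, ((P.Ψ (e.1, e.2.1) : ℝ) : EReal)

/-- `ẑ` is isolated: no feasible embedded strict-sense process in some `d`-neighborhood. -/
def Isolated (zh : ExtProcess P) : Prop :=
  ∃ r > (0 : ℝ), FeasReach zh r = ∅

/-! ### Auxiliary development -/

section Aux

lemma coord_abs_le_norm {ι : Type*} [Fintype ι] (x : EuclideanSpace ℝ ι) (i : ι) :
    |x i| ≤ ‖x‖ := by
  rw [EuclideanSpace.norm_eq]
  calc |x i| = Real.sqrt ((x i) ^ 2) := (Real.sqrt_sq_eq_abs _).symm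
    _ ≤ Real.sqrt (∑ j, ‖x j‖ ^ 2) := Real.sqrt_le_sqrt (by
        have := Finset.single_le_sum (f := fun j => ‖x j‖ ^ 2)
          (fun j _ => sq_nonneg _) (Finset.mem_univ i)
        simpa [Real.norm_eq_abs, sq_abs] using this)

lemma smul_diff_bound {E : Type*} [NormedAddCommGroup E] [NormedSpace ℝ E]
    (a b : ℝ) (u v : E) : ‖a • u - b • v‖ ≤ |a| * ‖u - v‖ + |a - b| * ‖v‖ := by
  have h : a • u - b • v = a • (u - v) + (a - b) • v := by
    rw [smul_sub, sub_smul]; abel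
  rw [h]
  refine (norm_add_le _ _).trans ?_
  rw [norm_smul, norm_smul, Real.norm_eq_abs, Real.norm_eq_abs]

variable {n m₁ m₂ : ℕ} {P : Setup n m₁ m₂}

/-- The full (extended) velocity field of a process. -/
def vf (z : ExtProcess P) (t : ℝ) : Euc n :=
  z.w0 t • P.f (z.y t) + ∑ i : Fin m₁ ⊕ Fin m₂, z.w t i • P.g i (z.y t)

lemma ctrl_bounds (z : ExtProcess P) :
    ∀ᵐ s ∂(volume.restrict (Set.Icc 0 z.S)), 0 ≤ z.w0 s ∧ z.w0 s ≤ 1 ∧ ‖z.w s‖ ≤ 1 := by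
  filter_upwards [z.hw0_nonneg, z.hw_norm] with s h0 h1
  refine ⟨h0, ?_, ?_⟩ <;> nlinarith [norm_nonneg (z.w s)]

lemma vf_meas (z : ExtProcess P) :
    AEStronglyMeasurable (vf z) (volume.restrict (Set.Icc 0 z.S)) := by
  have hy : AEStronglyMeasurable z.y (volume.restrict (Set.Icc 0 z.S)) :=
    z.hy_cont.aestronglyMeasurable measurableSet_Icc
  refine (z.hw0_meas.smul (P.hf.continuous.comp_aestronglyMeasurable hy)).add ?_
  refine Finset.aestronglyMeasurable_fun_sum _ fun i _ => ?_
  have hwi : AEStronglyMeasurable (fun t => z.w t i) (volume.restrict (Set.Icc 0 z.S)) :=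
    (EuclideanSpace.proj (𝕜 := ℝ) i).continuous.comp_aestronglyMeasurable z.hw_meas
  exact hwi.smul ((P.hg i).continuous.comp_aestronglyMeasurable hy)

lemma vf_bound (z : ExtProcess P) {Kf : ℝ} {Kg : Fin m₁ ⊕ Fin m₂ → ℝ}
    (hKf : ∀ x, ‖P.f x‖ ≤ Kf) (hKg : ∀ i x, ‖P.g i x‖ ≤ Kg i) :
    ∀ᵐ t ∂(volume.restrict (Set.Icc 0 z.S)), ‖vf z t‖ ≤ Kf + ∑ i, Kg i := by
  filter_upwards [ctrl_bounds z] with t ht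
  obtain ⟨h0, h1, hw⟩ := ht
  have h2 : ‖z.w0 t • P.f (z.y t)‖ ≤ Kf := by
    rw [norm_smul, Real.norm_eq_abs, abs_of_nonneg h0]
    calc z.w0 t * ‖P.f (z.y t)‖ ≤ 1 * Kf :=
          mul_le_mul h1 (hKf _) (norm_nonneg _) zero_le_one
      _ = Kf := one_mul _
  have h3 : ‖∑ i : Fin m₁ ⊕ Fin m₂, z.w t i • P.g i (z.y t)‖ ≤ ∑ i, Kg i := by
    refine (norm_sum_le _ _).trans (Finset.sum_le_sum fun i _ => ?_)
    rw [norm_smul, Real.norm_eq_abs]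
    have hz1 : |z.w t i| ≤ 1 := (coord_abs_le_norm _ i).trans hw
    calc |z.w t i| * ‖P.g i (z.y t)‖ ≤ 1 * Kg i :=
          mul_le_mul hz1 (hKg i _) (norm_nonneg _) zero_le_one
      _ = Kg i := one_mul _
  calc ‖vf z t‖ ≤ ‖z.w0 t • P.f (z.y t)‖ + ‖∑ i : Fin m₁ ⊕ Fin m₂, z.w t i • P.g i (z.y t)‖ :=
        norm_add_le _ _
    _ ≤ Kf + ∑ i, Kg i := add_le_add h2 h3

lemma integrableOn_of_bound {E : Type*} [NormedAddCommGroup E] {f : ℝ → E} {a b : ℝ}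
    (hm : AEStronglyMeasurable f (volume.restrict (Set.Icc a b)))
    {C : ℝ} (hb : ∀ᵐ t ∂(volume.restrict (Set.Icc a b)), ‖f t‖ ≤ C) :
    IntegrableOn f (Set.Icc a b) volume :=
  Integrable.mono' (integrableOn_const measure_Icc_lt_top.ne) hm hb

lemma ii_of_integrableOn {E : Type*} [NormedAddCommGroup E] {f : ℝ → E} {S : ℝ}
    (h : IntegrableOn f (Set.Icc 0 S) volume) {s t : ℝ}
    (hs : s ∈ Set.Icc 0 S) (ht : t ∈ Set.Icc 0 S) : IntervalIntegrable f volume s t := by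
  rw [intervalIntegrable_iff]
  exact h.mono_set ((Set.uIoc_subset_uIcc).trans (Set.uIcc_subset_Icc hs ht))

set_option maxHeartbeats 2000000 in
lemma endpt_dist_le (zh : ExtProcess P) :
    ∃ C > 0, ∀ z : ExtProcess P, dist (endpt z) (endpt zh) ≤ C * dproc z zh := by
  classical
  obtain ⟨Mf, hMf⟩ := P.hf_bdd
  choose Mg hMg using P.hg_bdd
  set Kf : ℝ := max Mf 0 with hKfdef
  set Kg : Fin m₁ ⊕ Fin m₂ → ℝ := fun i => max (Mg i) 0 with hKgdef
  set L : ℝ := Kf + (∑ i, Kg i) + 1 with hLdef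
  have hKf0 : 0 ≤ Kf := le_max_right _ _
  have hKg0 : ∀ i, 0 ≤ Kg i := fun i => le_max_right _ _
  have hSg0 : 0 ≤ ∑ i, Kg i := Finset.sum_nonneg fun i _ => hKg0 i
  have hL1 : 1 ≤ L := by rw [hLdef]; linarith
  have hL0 : 0 < L := zero_lt_one.trans_le hL1
  have hKfb : ∀ x, ‖P.f x‖ ≤ Kf := fun x => (hMf x).1.trans (le_max_left _ _)
  have hKgb : ∀ i x, ‖P.g i x‖ ≤ Kg i := fun i x => ((hMg i) x).1.trans (le_max_left _ _)
  have hlipf : ∀ u v, ‖P.f u - P.f v‖ ≤ Kf * ‖u - v‖ := by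
    have hl : LipschitzWith ⟨Kf, hKf0⟩ P.f :=
      lipschitzWith_of_nnnorm_fderiv_le (P.hf.differentiable one_ne_zero) (fun x => by
        exact NNReal.coe_le_coe.1 (((hMf x).2).trans (le_max_left _ _)))
    intro u v
    rw [← dist_eq_norm, ← dist_eq_norm]; exact hl.dist_le_mul u v
  have hlipg : ∀ i u v, ‖P.g i u - P.g i v‖ ≤ Kg i * ‖u - v‖ := by
    intro i
    have hl : LipschitzWith ⟨Kg i, hKg0 i⟩ (P.g i) :=
      lipschitzWith_of_nnnorm_fderiv_le ((P.hg i).differentiable one_ne_zero) (fun x => by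
        exact NNReal.coe_le_coe.1 ((((hMg i) x).2).trans (le_max_left _ _)))
    intro u v
    rw [← dist_eq_norm, ← dist_eq_norm]; exact hl.dist_le_mul u v
  have hvfb : ∀ z : ExtProcess P,
      ∀ᵐ t ∂(volume.restrict (Set.Icc 0 z.S)), ‖vf z t‖ ≤ L := by
    intro z
    filter_upwards [vf_bound z hKfb hKgb] with t ht
    calc ‖vf z t‖ ≤ Kf + ∑ i, Kg i := ht
      _ ≤ L := by rw [hLdef]; linarith
  have hvfi : ∀ z : ExtProcess P, IntegrableOn (vf z) (Set.Icc 0 z.S) volume :=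
    fun z => integrableOn_of_bound (vf_meas z) (hvfb z)
  have hy' : ∀ (z : ExtProcess P) (s : ℝ), s ∈ Set.Icc 0 z.S →
      z.y s = P.x0 + ∫ t in (0:ℝ)..s, vf z t := fun z => z.hy
  have hmove : ∀ (z : ExtProcess P) {s t : ℝ}, s ∈ Set.Icc 0 z.S → t ∈ Set.Icc 0 z.S →
      s ≤ t → ‖z.y t - z.y s‖ ≤ L * (t - s) := by
    intro z s t hs ht hst
    have h0S : (0:ℝ) ∈ Set.Icc 0 z.S := ⟨le_rfl, z.hS.le⟩
    have hyd : z.y t - z.y s = ∫ u in s..t, vf z u := by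
      rw [hy' z t ht, hy' z s hs, add_sub_add_left_eq_sub]
      exact intervalIntegral.integral_interval_sub_left
        (ii_of_integrableOn (hvfi z) h0S ht) (ii_of_integrableOn (hvfi z) h0S hs)
    rw [hyd]
    have hb' : ∀ᵐ u ∂volume, u ∈ Set.uIoc s t → ‖vf z u‖ ≤ L := by
      filter_upwards [(ae_restrict_iff' measurableSet_Icc).1 (hvfb z)] with u hu hmem
      rw [Set.uIoc_of_le hst] at hmem
      exact hu ⟨hs.1.trans hmem.1.le, hmem.2.trans ht.2⟩
    have hnb := intervalIntegral.norm_integral_le_of_norm_le_const_ae hb'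
    rwa [abs_of_nonneg (sub_nonneg.2 hst)] at hnb
  have hw0i : ∀ z : ExtProcess P, IntegrableOn z.w0 (Set.Icc 0 z.S) volume := by
    intro z
    apply integrableOn_of_bound z.hw0_meas
    filter_upwards [ctrl_bounds z] with t ht
    rw [Real.norm_eq_abs, abs_of_nonneg ht.1]; exact ht.2.1
  have hwni : ∀ z : ExtProcess P, IntegrableOn (fun t => ‖z.w t‖) (Set.Icc 0 z.S) volume := by
    intro z
    apply integrableOn_of_bound z.hw_meas.norm
    filter_upwards [ctrl_bounds z] with t ht
    rw [norm_norm]; exact ht.2.2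
  have htail : ∀ (z : ExtProcess P) {s : ℝ}, s ∈ Set.Icc 0 z.S →
      |∫ u in s..z.S, z.w0 u| ≤ z.S - s ∧ |∫ u in s..z.S, ‖z.w u‖| ≤ z.S - s := by
    intro z s hs
    have hglob := (ae_restrict_iff' measurableSet_Icc).1 (ctrl_bounds z)
    have hmem : ∀ u, u ∈ Set.uIoc s z.S → u ∈ Set.Icc 0 z.S := by
      intro u hu
      rw [Set.uIoc_of_le hs.2] at hu
      exact ⟨hs.1.trans hu.1.le, hu.2⟩
    constructor
    · have h1 : ∀ᵐ u ∂volume, u ∈ Set.uIoc s z.S → ‖z.w0 u‖ ≤ 1 := by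
        filter_upwards [hglob] with u hu hm
        obtain ⟨a, b, _⟩ := hu (hmem u hm)
        rw [Real.norm_eq_abs, abs_of_nonneg a]; exact b
      have := intervalIntegral.norm_integral_le_of_norm_le_const_ae h1
      rwa [abs_of_nonneg (sub_nonneg.2 hs.2), one_mul, Real.norm_eq_abs] at this
    · have h1 : ∀ᵐ u ∂volume, u ∈ Set.uIoc s z.S → ‖(‖z.w u‖)‖ ≤ 1 := by
        filter_upwards [hglob] with u hu hm
        rw [norm_norm]; exact (hu (hmem u hm)).2.2
      have := intervalIntegral.norm_integral_le_of_norm_le_const_ae h1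
      rwa [abs_of_nonneg (sub_nonneg.2 hs.2), one_mul, Real.norm_eq_abs] at this
  refine ⟨L * Real.exp (L * zh.S) + L + 1, by positivity, fun z => ?_⟩
  set T := min z.S zh.S with hTdef
  have hT0 : 0 ≤ T := le_min z.hS.le zh.hS.le
  have hTz : T ≤ z.S := min_le_left _ _
  have hTh : T ≤ zh.S := min_le_right _ _
  have hTmem : T ∈ Set.Icc 0 T := Set.right_mem_Icc.2 hT0
  have hTmemz : T ∈ Set.Icc 0 z.S := ⟨hT0, hTz⟩
  have hTmemh : T ∈ Set.Icc 0 zh.S := ⟨hT0, hTh⟩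
  have h0memz : (0:ℝ) ∈ Set.Icc 0 z.S := ⟨le_rfl, z.hS.le⟩
  have h0memh : (0:ℝ) ∈ Set.Icc 0 zh.S := ⟨le_rfl, zh.hS.le⟩
  have hSmemz : z.S ∈ Set.Icc 0 z.S := ⟨z.hS.le, le_rfl⟩
  have hSmemh : zh.S ∈ Set.Icc 0 zh.S := ⟨zh.hS.le, le_rfl⟩
  have hsubz : Set.Icc 0 T ⊆ Set.Icc 0 z.S := Set.Icc_subset_Icc le_rfl hTz
  have hsubh : Set.Icc 0 T ⊆ Set.Icc 0 zh.S := Set.Icc_subset_Icc le_rfl hTh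
  have hmz : volume.restrict (Set.Icc 0 T) ≤ volume.restrict (Set.Icc 0 z.S) :=
    Measure.restrict_mono hsubz le_rfl
  have hmh : volume.restrict (Set.Icc 0 T) ≤ volume.restrict (Set.Icc 0 zh.S) :=
    Measure.restrict_mono hsubh le_rfl
  set g2 : ℝ → ℝ := fun t => |z.w0 t - zh.w0 t| + ‖z.w t - zh.w t‖ with hg2def
  set D : ℝ := ∫ t in Set.Icc 0 T, g2 t with hDdef
  have hdp : dproc z zh = |z.S - zh.S| + D := rfl
  have hg2nn : ∀ t, 0 ≤ g2 t := fun t => add_nonneg (abs_nonneg _) (norm_nonneg _)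
  have hbz : ∀ᵐ t ∂(volume.restrict (Set.Icc 0 T)),
      0 ≤ z.w0 t ∧ z.w0 t ≤ 1 ∧ ‖z.w t‖ ≤ 1 := (ctrl_bounds z).filter_mono (ae_mono hmz)
  have hbh : ∀ᵐ t ∂(volume.restrict (Set.Icc 0 T)),
      0 ≤ zh.w0 t ∧ zh.w0 t ≤ 1 ∧ ‖zh.w t‖ ≤ 1 := (ctrl_bounds zh).filter_mono (ae_mono hmh)
  have hg2m : AEStronglyMeasurable g2 (volume.restrict (Set.Icc 0 T)) := by
    have h1 := (z.hw0_meas.mono_measure hmz).sub (zh.hw0_meas.mono_measure hmh)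
    have h2 := (z.hw_meas.mono_measure hmz).sub (zh.hw_meas.mono_measure hmh)
    exact (h1.norm.add h2.norm : AEStronglyMeasurable
      (fun t => ‖z.w0 t - zh.w0 t‖ + ‖z.w t - zh.w t‖) _)
  have hg2b : ∀ᵐ t ∂(volume.restrict (Set.Icc 0 T)), ‖g2 t‖ ≤ 4 := by
    filter_upwards [hbz, hbh] with t h1 h2
    have e1 : |z.w0 t - zh.w0 t| ≤ 2 := by
      have := abs_sub (z.w0 t) (zh.w0 t)
      have a1 : |z.w0 t| ≤ 1 := abs_le.2 ⟨by linarith [h1.1], h1.2.1⟩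
      have a2 : |zh.w0 t| ≤ 1 := abs_le.2 ⟨by linarith [h2.1], h2.2.1⟩
      linarith
    have e2 : ‖z.w t - zh.w t‖ ≤ 2 := (norm_sub_le _ _).trans (by linarith [h1.2.2, h2.2.2])
    rw [Real.norm_eq_abs, abs_of_nonneg (hg2nn t)]
    simp only [hg2def]; linarith
  have hg2i : IntegrableOn g2 (Set.Icc 0 T) volume := integrableOn_of_bound hg2m hg2b
  have hg2ii : ∀ x ∈ Set.Icc 0 T, IntervalIntegrable g2 volume 0 x :=
    fun x hx => ii_of_integrableOn hg2i (Set.left_mem_Icc.2 hT0) hx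
  have hD0 : 0 ≤ D := setIntegral_nonneg measurableSet_Icc fun t _ => hg2nn t
  have hintg2le : ∀ x ∈ Set.Icc 0 T, ∫ t in (0:ℝ)..x, g2 t ≤ D := by
    intro x hx
    rw [intervalIntegral.integral_of_le hx.1, hDdef]
    exact setIntegral_mono_set hg2i (Filter.Eventually.of_forall fun t => hg2nn t)
      ((Set.Ioc_subset_Icc_self.trans (Set.Icc_subset_Icc le_rfl hx.2)).eventuallyLE)
  set c : ℝ → ℝ := fun t => min T (max 0 t) with hcdef
  have hccont : Continuous c := continuous_const.min (continuous_const.max continuous_id)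
  have hcmem : ∀ t, c t ∈ Set.Icc 0 T :=
    fun t => ⟨le_min hT0 (le_max_left _ _), min_le_left _ _⟩
  have hceq : ∀ x ∈ Set.Icc 0 T, c x = x := by
    intro x hx
    simp only [hcdef]
    rw [max_eq_right hx.1, min_eq_right hx.2]
  set φ : ℝ → ℝ := fun t => ‖z.y (c t) - zh.y (c t)‖ with hφdef
  have hφcont : Continuous φ :=
    (((z.hy_cont.mono hsubz).comp_continuous hccont hcmem).sub
      ((zh.hy_cont.mono hsubh).comp_continuous hccont hcmem)).norm
  have hφnn : ∀ t, 0 ≤ φ t := fun t => norm_nonneg _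
  have hφeq : ∀ x ∈ Set.Icc 0 T, φ x = ‖z.y x - zh.y x‖ := by
    intro x hx; simp only [hφdef]; rw [hceq x hx]
  set ψ : ℝ → ℝ := fun s => ∫ t in (0:ℝ)..s, φ t with hψdef
  have hψd : ∀ x, HasDerivAt ψ (φ x) x :=
    fun x => (hφcont.integral_hasStrictDerivAt 0 x).hasDerivAt
  have hψnn : ∀ x, 0 ≤ x → 0 ≤ ψ x :=
    fun x hx => intervalIntegral.integral_nonneg hx fun u _ => hφnn u
  have hae : ∀ᵐ t ∂(volume.restrict (Set.Icc 0 T)),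
      ‖vf z t - vf zh t‖ ≤ L * φ t + L * g2 t := by
    filter_upwards [hbz, hbh, ae_restrict_mem measurableSet_Icc] with t h1 h2 htm
    obtain ⟨hz0, hz1, hzw⟩ := h1
    obtain ⟨hh0, hh1, hhw⟩ := h2
    have hφt : φ t = ‖z.y t - zh.y t‖ := hφeq t htm
    have hterm1 : ‖z.w0 t • P.f (z.y t) - zh.w0 t • P.f (zh.y t)‖ ≤
        Kf * φ t + Kf * |z.w0 t - zh.w0 t| := by
      refine (smul_diff_bound _ _ _ _).trans ?_
      have e1 : |z.w0 t| ≤ 1 := abs_le.2 ⟨by linarith, hz1⟩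
      have e2 : ‖P.f (z.y t) - P.f (zh.y t)‖ ≤ Kf * φ t := by
        rw [hφt]; exact hlipf _ _
      have e4 : ‖P.f (zh.y t)‖ ≤ Kf := hKfb _
      nlinarith [abs_nonneg (z.w0 t), norm_nonneg (P.f (z.y t) - P.f (zh.y t)),
        abs_nonneg (z.w0 t - zh.w0 t), norm_nonneg (P.f (zh.y t)), hφnn t, hKf0]
    have hterm2 : ∀ i, ‖z.w t i • P.g i (z.y t) - zh.w t i • P.g i (zh.y t)‖ ≤
        Kg i * φ t + Kg i * ‖z.w t - zh.w t‖ := by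
      intro i
      refine (smul_diff_bound _ _ _ _).trans ?_
      have e1 : |z.w t i| ≤ 1 := (coord_abs_le_norm _ i).trans hzw
      have e2 : ‖P.g i (z.y t) - P.g i (zh.y t)‖ ≤ Kg i * φ t := by
        rw [hφt]; exact hlipg i _ _
      have e3 : |z.w t i - zh.w t i| ≤ ‖z.w t - zh.w t‖ := by
        have h := coord_abs_le_norm (z.w t - zh.w t) i
        rwa [PiLp.sub_apply] at h
      have e4 : ‖P.g i (zh.y t)‖ ≤ Kg i := hKgb i _
      nlinarith [abs_nonneg (z.w t i), norm_nonneg (P.g i (z.y t) - P.g i (zh.y t)),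
        abs_nonneg (z.w t i - zh.w t i), norm_nonneg (P.g i (zh.y t)), hφnn t, hKg0 i,
        norm_nonneg (z.w t - zh.w t)]
    have hsplit : vf z t - vf zh t =
        (z.w0 t • P.f (z.y t) - zh.w0 t • P.f (zh.y t)) +
          ∑ i : Fin m₁ ⊕ Fin m₂, (z.w t i • P.g i (z.y t) - zh.w t i • P.g i (zh.y t)) := by
      rw [vf, vf, Finset.sum_sub_distrib]; abel
    have hstep : ‖vf z t - vf zh t‖ ≤
        (Kf * φ t + Kf * |z.w0 t - zh.w0 t|) +
          ∑ i : Fin m₁ ⊕ Fin m₂, (Kg i * φ t + Kg i * ‖z.w t - zh.w t‖) := by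
      rw [hsplit]
      exact (norm_add_le _ _).trans (add_le_add hterm1
        ((norm_sum_le _ _).trans (Finset.sum_le_sum fun i _ => hterm2 i)))
    refine hstep.trans ?_
    rw [Finset.sum_add_distrib, ← Finset.sum_mul, ← Finset.sum_mul]
    simp only [hg2def, hLdef]
    nlinarith [hφnn t, abs_nonneg (z.w0 t - zh.w0 t), norm_nonneg (z.w t - zh.w t),
      mul_nonneg hSg0 (abs_nonneg (z.w0 t - zh.w0 t)),
      mul_nonneg hKf0 (norm_nonneg (z.w t - zh.w t))]
  have hcore : ∀ x ∈ Set.Icc 0 T, φ x ≤ L * ψ x + L * D := by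
    intro x hx
    have hx1 : (0:ℝ) ≤ x := hx.1
    have hIsub : Set.uIoc 0 x ⊆ Set.Icc 0 T := by
      rw [Set.uIoc_of_le hx1]
      exact Set.Ioc_subset_Icc_self.trans (Set.Icc_subset_Icc le_rfl hx.2)
    have hiiz : IntervalIntegrable (vf z) volume 0 x :=
      ii_of_integrableOn (hvfi z) h0memz (hsubz hx)
    have hiih : IntervalIntegrable (vf zh) volume 0 x :=
      ii_of_integrableOn (hvfi zh) h0memh (hsubh hx)
    have hdiff : z.y x - zh.y x = ∫ t in (0:ℝ)..x, (vf z t - vf zh t) := by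
      rw [hy' z x (hsubz hx), hy' zh x (hsubh hx), add_sub_add_left_eq_sub,
        intervalIntegral.integral_sub hiiz hiih]
    rw [hφeq x hx, hdiff]
    have hIIφ : IntervalIntegrable (fun t => L * φ t) volume 0 x :=
      (continuous_const.mul hφcont).intervalIntegrable _ _
    have hIIg : IntervalIntegrable (fun t => L * g2 t) volume 0 x := (hg2ii x hx).const_mul L
    have h1 : ‖∫ t in (0:ℝ)..x, (vf z t - vf zh t)‖ ≤
        |∫ t in (0:ℝ)..x, (L * φ t + L * g2 t)| := by
      refine intervalIntegral.norm_integral_le_abs_of_norm_le ?_ (hIIφ.add hIIg)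
      exact hae.filter_mono (ae_mono (Measure.restrict_mono hIsub le_rfl))
    have h2 : ∫ t in (0:ℝ)..x, (L * φ t + L * g2 t) =
        L * ψ x + L * ∫ t in (0:ℝ)..x, g2 t := by
      rw [intervalIntegral.integral_add hIIφ hIIg, intervalIntegral.integral_const_mul,
        intervalIntegral.integral_const_mul]
    have h3 : 0 ≤ ∫ t in (0:ℝ)..x, (L * φ t + L * g2 t) :=
      intervalIntegral.integral_nonneg hx1 fun u _ =>
        add_nonneg (mul_nonneg hL0.le (hφnn u)) (mul_nonneg hL0.le (hg2nn u))
    rw [abs_of_nonneg h3, h2] at h1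
    have h4 := hintg2le x hx
    have h5 : L * ∫ t in (0:ℝ)..x, g2 t ≤ L * D := mul_le_mul_of_nonneg_left h4 hL0.le
    linarith
  have hgron := norm_le_gronwallBound_of_norm_deriv_right_le (f := ψ) (f' := φ)
    (δ := 0) (K := L) (ε := L * D) (a := 0) (b := T)
    (fun x _ => (hψd x).continuousAt.continuousWithinAt)
    (fun x _ => (hψd x).hasDerivWithinAt)
    (by simp only [hψdef]; rw [intervalIntegral.integral_same]; simp)
    (fun x hxI => by
      rw [Real.norm_eq_abs, Real.norm_eq_abs, abs_of_nonneg (hφnn x),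
        abs_of_nonneg (hψnn x hxI.1)]
      exact hcore x (Set.Ico_subset_Icc_self hxI))
    T hTmem
  have hψT : ψ T ≤ D * (Real.exp (L * T) - 1) := by
    rw [Real.norm_eq_abs, abs_of_nonneg (hψnn T hT0), gronwallBound_of_K_ne_0 hL0.ne',
      sub_zero] at hgron
    have hLD : L * D / L = D := by
      rw [mul_comm, mul_div_assoc, div_self hL0.ne', mul_one]
    simp only [zero_mul, zero_add, hLD] at hgron
    exact hgron
  have hyTb : ‖z.y T - zh.y T‖ ≤ L * Real.exp (L * zh.S) * D := by
    have h5 := hcore T hTmem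
    rw [hφeq T hTmem] at h5
    have hexp : Real.exp (L * T) ≤ Real.exp (L * zh.S) :=
      Real.exp_le_exp.2 (mul_le_mul_of_nonneg_left hTh hL0.le)
    have hexp1 : 1 ≤ Real.exp (L * T) := Real.one_le_exp (mul_nonneg hL0.le hT0)
    nlinarith [mul_le_mul_of_nonneg_left hψT hL0.le,
      mul_le_mul_of_nonneg_left hexp (mul_nonneg hL0.le hD0)]
  have hsum : (z.S - T) + (zh.S - T) = |z.S - zh.S| := by
    rcases le_total z.S zh.S with h | h
    · rw [hTdef, min_eq_left h, abs_of_nonpos (sub_nonpos.2 h)]; ring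
    · rw [hTdef, min_eq_right h, abs_of_nonneg (sub_nonneg.2 h)]; ring
  -- state component
  have hyfinal : ‖z.y z.S - zh.y zh.S‖ ≤
      L * Real.exp (L * zh.S) * D + L * |z.S - zh.S| := by
    have t1 : ‖z.y z.S - z.y T‖ ≤ L * (z.S - T) := hmove z hTmemz hSmemz hTz
    have t2 : ‖zh.y zh.S - zh.y T‖ ≤ L * (zh.S - T) := hmove zh hTmemh hSmemh hTh
    have htri := dist_triangle4 (z.y z.S) (z.y T) (zh.y T) (zh.y zh.S)
    rw [dist_eq_norm, dist_eq_norm, dist_eq_norm, dist_eq_norm] at htri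
    have t2' : ‖zh.y T - zh.y zh.S‖ ≤ L * (zh.S - T) := by rwa [norm_sub_rev] at t2
    have := hsum
    nlinarith [hyTb]
  -- time component
  have hy0final : |z.y0 z.S - zh.y0 zh.S| ≤ D + |z.S - zh.S| := by
    have hiz1 : IntervalIntegrable z.w0 volume 0 T := ii_of_integrableOn (hw0i z) h0memz hTmemz
    have hiz2 : IntervalIntegrable z.w0 volume T z.S := ii_of_integrableOn (hw0i z) hTmemz hSmemz
    have hih1 : IntervalIntegrable zh.w0 volume 0 T := ii_of_integrableOn (hw0i zh) h0memh hTmemh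
    have hih2 : IntervalIntegrable zh.w0 volume T zh.S :=
      ii_of_integrableOn (hw0i zh) hTmemh hSmemh
    have hv1 : z.y0 z.S = (∫ u in (0:ℝ)..T, z.w0 u) + ∫ u in T..z.S, z.w0 u := by
      rw [z.hy0 z.S hSmemz, intervalIntegral.integral_add_adjacent_intervals hiz1 hiz2]
    have hv2 : zh.y0 zh.S = (∫ u in (0:ℝ)..T, zh.w0 u) + ∫ u in T..zh.S, zh.w0 u := by
      rw [zh.hy0 zh.S hSmemh, intervalIntegral.integral_add_adjacent_intervals hih1 hih2]
    have hmid : |(∫ u in (0:ℝ)..T, z.w0 u) - ∫ u in (0:ℝ)..T, zh.w0 u| ≤ D := by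
      rw [← intervalIntegral.integral_sub hiz1 hih1, ← Real.norm_eq_abs]
      have hb : ∀ᵐ u ∂(volume.restrict (Set.uIoc 0 T)), ‖z.w0 u - zh.w0 u‖ ≤ g2 u := by
        refine Filter.Eventually.of_forall fun u => ?_
        rw [Real.norm_eq_abs]
        simp only [hg2def]
        exact le_add_of_nonneg_right (norm_nonneg _)
      refine (intervalIntegral.norm_integral_le_abs_of_norm_le hb (hg2ii T hTmem)).trans ?_
      rw [abs_of_nonneg (intervalIntegral.integral_nonneg hT0 fun u _ => hg2nn u),
        intervalIntegral.integral_of_le hT0, hDdef, integral_Icc_eq_integral_Ioc]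
    have ht1 := (htail z hTmemz).1
    have ht2 := (htail zh hTmemh).1
    rw [hv1, hv2]
    have habs : |((∫ u in (0:ℝ)..T, z.w0 u) + ∫ u in T..z.S, z.w0 u) -
        ((∫ u in (0:ℝ)..T, zh.w0 u) + ∫ u in T..zh.S, zh.w0 u)| ≤
        |(∫ u in (0:ℝ)..T, z.w0 u) - ∫ u in (0:ℝ)..T, zh.w0 u| +
        |∫ u in T..z.S, z.w0 u| + |∫ u in T..zh.S, zh.w0 u| := by
      have e : ((∫ u in (0:ℝ)..T, z.w0 u) + ∫ u in T..z.S, z.w0 u) -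
          ((∫ u in (0:ℝ)..T, zh.w0 u) + ∫ u in T..zh.S, zh.w0 u) =
          ((∫ u in (0:ℝ)..T, z.w0 u) - ∫ u in (0:ℝ)..T, zh.w0 u) +
          (∫ u in T..z.S, z.w0 u) + -(∫ u in T..zh.S, zh.w0 u) := by ring
      rw [e]
      refine (abs_add_le _ _).trans ?_
      rw [abs_neg]
      exact add_le_add_left (abs_add_le _ _) _
    have := hsum
    linarith
  -- energy component
  have hβfinal : |z.β z.S - zh.β zh.S| ≤ D + |z.S - zh.S| := by
    have hiz1 : IntervalIntegrable (fun u => ‖z.w u‖) volume 0 T :=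
      ii_of_integrableOn (hwni z) h0memz hTmemz
    have hiz2 : IntervalIntegrable (fun u => ‖z.w u‖) volume T z.S :=
      ii_of_integrableOn (hwni z) hTmemz hSmemz
    have hih1 : IntervalIntegrable (fun u => ‖zh.w u‖) volume 0 T :=
      ii_of_integrableOn (hwni zh) h0memh hTmemh
    have hih2 : IntervalIntegrable (fun u => ‖zh.w u‖) volume T zh.S :=
      ii_of_integrableOn (hwni zh) hTmemh hSmemh
    have hv1 : z.β z.S = (∫ u in (0:ℝ)..T, ‖z.w u‖) + ∫ u in T..z.S, ‖z.w u‖ := by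
      rw [z.hβ z.S hSmemz, intervalIntegral.integral_add_adjacent_intervals hiz1 hiz2]
    have hv2 : zh.β zh.S = (∫ u in (0:ℝ)..T, ‖zh.w u‖) + ∫ u in T..zh.S, ‖zh.w u‖ := by
      rw [zh.hβ zh.S hSmemh, intervalIntegral.integral_add_adjacent_intervals hih1 hih2]
    have hmid : |(∫ u in (0:ℝ)..T, ‖z.w u‖) - ∫ u in (0:ℝ)..T, ‖zh.w u‖| ≤ D := by
      rw [← intervalIntegral.integral_sub hiz1 hih1, ← Real.norm_eq_abs]
      have hb : ∀ᵐ u ∂(volume.restrict (Set.uIoc 0 T)), ‖(‖z.w u‖ - ‖zh.w u‖)‖ ≤ g2 u := by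
        refine Filter.Eventually.of_forall fun u => ?_
        rw [Real.norm_eq_abs]
        simp only [hg2def]
        have := abs_norm_sub_norm_le (z.w u) (zh.w u)
        have := abs_nonneg (z.w0 u - zh.w0 u)
        linarith
      refine (intervalIntegral.norm_integral_le_abs_of_norm_le hb (hg2ii T hTmem)).trans ?_
      rw [abs_of_nonneg (intervalIntegral.integral_nonneg hT0 fun u _ => hg2nn u),
        intervalIntegral.integral_of_le hT0, hDdef, integral_Icc_eq_integral_Ioc]
    have ht1 := (htail z hTmemz).2
    have ht2 := (htail zh hTmemh).2
    rw [hv1, hv2]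
    have habs : |((∫ u in (0:ℝ)..T, ‖z.w u‖) + ∫ u in T..z.S, ‖z.w u‖) -
        ((∫ u in (0:ℝ)..T, ‖zh.w u‖) + ∫ u in T..zh.S, ‖zh.w u‖)| ≤
        |(∫ u in (0:ℝ)..T, ‖z.w u‖) - ∫ u in (0:ℝ)..T, ‖zh.w u‖| +
        |∫ u in T..z.S, ‖z.w u‖| + |∫ u in T..zh.S, ‖zh.w u‖| := by
      have e : ((∫ u in (0:ℝ)..T, ‖z.w u‖) + ∫ u in T..z.S, ‖z.w u‖) -
          ((∫ u in (0:ℝ)..T, ‖zh.w u‖) + ∫ u in T..zh.S, ‖zh.w u‖) =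
          ((∫ u in (0:ℝ)..T, ‖z.w u‖) - ∫ u in (0:ℝ)..T, ‖zh.w u‖) +
          (∫ u in T..z.S, ‖z.w u‖) + -(∫ u in T..zh.S, ‖zh.w u‖) := by ring
      rw [e]
      refine (abs_add_le _ _).trans ?_
      rw [abs_neg]
      exact add_le_add_left (abs_add_le _ _) _
    have := hsum
    linarith
  -- assemble
  have hde : dist (endpt z) (endpt zh) =
      max |z.y0 z.S - zh.y0 zh.S| (max ‖z.y z.S - zh.y zh.S‖ |z.β z.S - zh.β zh.S|) := by
    simp [endpt, Prod.dist_eq, Real.dist_eq, dist_eq_norm, Prod.norm_def, Real.norm_eq_abs]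
  rw [hde, hdp]
  have hexp1 : (1:ℝ) ≤ Real.exp (L * zh.S) :=
    Real.one_le_exp (mul_nonneg hL0.le zh.hS.le)
  have habs0 : 0 ≤ |z.S - zh.S| := abs_nonneg _
  refine max_le ?_ (max_le ?_ ?_)
  · nlinarith [mul_nonneg (mul_nonneg hL0.le (Real.exp_pos (L * zh.S)).le) hD0,
      mul_nonneg hL0.le habs0, mul_nonneg hL0.le hD0,
      mul_nonneg (mul_nonneg hL0.le (Real.exp_pos (L * zh.S)).le) habs0]
  · nlinarith [hyfinal, mul_nonneg (mul_nonneg hL0.le (Real.exp_pos (L * zh.S)).le) habs0,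
      hD0, mul_nonneg hL0.le hD0]
  · nlinarith [mul_nonneg (mul_nonneg hL0.le (Real.exp_pos (L * zh.S)).le) hD0,
      mul_nonneg hL0.le habs0, mul_nonneg hL0.le hD0,
      mul_nonneg (mul_nonneg hL0.le (Real.exp_pos (L * zh.S)).le) habs0]

lemma FeasReach_mono (zh : ExtProcess P) {r r' : ℝ} (h : r ≤ r') :
    FeasReach zh r ⊆ FeasReach zh r' := by
  rintro e ⟨⟨w, hw1, hw2, hw3⟩, he⟩
  exact ⟨⟨w, hw1, hw2.trans_le h, hw3⟩, he⟩

end Aux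

/-- Lemma 4.1: for a feasible extended process `ẑ`, the following are
equivalent: (i) there is a local infimum gap at `ẑ`; (ii) `ẑ` is isolated; (iii) there is
`r̂ > 0` such that `inf{Φ(y⁰,y) : (y⁰,y,β) ∈ R^r_{W₊}(ẑ) ∩ (𝔗×[0,K])} = +∞` for every
continuous `Φ` and every `r ∈ (0, r̂]`. -/
theorem stmt14 (zh : ExtProcess P) (hfeas : Feasible zh) :
    (HasLocalGap zh ↔ Isolated zh) ∧
    (Isolated zh ↔
      ∃ rh > (0 : ℝ), ∀ Φ : ℝ × Euc n → ℝ, Continuous Φ →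
        ∀ r : ℝ, 0 < r → r ≤ rh →
          (⨅ e ∈ FeasReach zh r, ((Φ (e.1, e.2.1) : ℝ) : EReal)) = ⊤) := by
  have h21 : Isolated zh → HasLocalGap zh := by
    rintro ⟨r, hr, hempty⟩
    refine ⟨r, hr, ?_⟩
    rw [hempty]
    simpa using EReal.coe_lt_top (P.Ψ (zh.y0 zh.S, zh.y zh.S))
  have h12 : HasLocalGap zh → Isolated zh := by
    obtain ⟨C, hC0, hC⟩ := endpt_dist_le zh
    rintro ⟨r₀, hr₀, hgap⟩
    by_contra hiso
    rw [Isolated] at hiso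
    push_neg at hiso
    have hne : ∀ r : ℝ, 0 < r → (FeasReach zh r).Nonempty := hiso
    set I : EReal := ⨅ e ∈ FeasReach zh r₀, ((P.Ψ (e.1, e.2.1) : ℝ) : EReal) with hIdef
    obtain ⟨e₀, he₀⟩ := hne r₀ hr₀
    have hIle : I ≤ ((P.Ψ (e₀.1, e₀.2.1) : ℝ) : EReal) := iInf₂_le e₀ he₀
    have hItop : I ≠ ⊤ := (hIle.trans_lt (EReal.coe_lt_top _)).ne
    have hIbot : I ≠ ⊥ := by
      intro h
      rw [h] at hgap
      exact not_lt_bot hgap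
    set v : ℝ := P.Ψ (zh.y0 zh.S, zh.y zh.S) with hvdef
    have hIcoe : ((I.toReal : ℝ) : EReal) = I := EReal.coe_toReal hItop hIbot
    have hvI : v < I.toReal := by
      have h := hgap
      rw [← hIcoe] at h
      exact_mod_cast h
    set cm : ℝ := (v + I.toReal) / 2 with hcmdef
    have hvc : v < cm := by rw [hcmdef]; linarith
    have hcI : cm < I.toReal := by rw [hcmdef]; linarith
    have hcont : ContinuousAt P.Ψ (zh.y0 zh.S, zh.y zh.S) := P.hΨ.continuous.continuousAt
    obtain ⟨δ, hδ0, hδ⟩ := Metric.continuousAt_iff.1 hcont (cm - v) (by linarith)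
    set r : ℝ := min r₀ (δ / (C + 1)) with hrdef
    have hC1 : (0:ℝ) < C + 1 := by linarith
    have hr0 : 0 < r := lt_min hr₀ (div_pos hδ0 hC1)
    obtain ⟨e, he⟩ := hne r hr0
    have her₀ : e ∈ FeasReach zh r₀ := FeasReach_mono zh (min_le_left _ _) he
    obtain ⟨⟨w, _hw1, hw2, hw3⟩, _hT, _hK⟩ := he
    have hdist : dist (endpt w) (endpt zh) < δ := by
      have h1 : dist (endpt w) (endpt zh) ≤ C * dproc w zh := hC w
      have h2 : C * dproc w zh < C * r := mul_lt_mul_of_pos_left hw2 hC0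
      have h3 : C * r ≤ C * (δ / (C + 1)) :=
        mul_le_mul_of_nonneg_left (min_le_right _ _) hC0.le
      have h4 : C * (δ / (C + 1)) < δ := by
        rw [mul_div_assoc']
        rw [div_lt_iff₀ hC1]
        nlinarith
      linarith
    have hproj : dist ((endpt w).1, (endpt w).2.1) ((endpt zh).1, (endpt zh).2.1) ≤
        dist (endpt w) (endpt zh) := by
      rw [Prod.dist_eq, Prod.dist_eq, Prod.dist_eq]
      exact max_le_max le_rfl (le_max_left _ _)
    have hΨlt : P.Ψ ((endpt w).1, (endpt w).2.1) < cm := by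
      have hd : dist ((endpt w).1, (endpt w).2.1) (zh.y0 zh.S, zh.y zh.S) < δ := by
        have : ((endpt zh).1, (endpt zh).2.1) = (zh.y0 zh.S, zh.y zh.S) := rfl
        rw [← this]
        exact lt_of_le_of_lt hproj hdist
      have := hδ hd
      rw [Real.dist_eq] at this
      have habs := abs_lt.1 this
      linarith [habs.1, habs.2]
    have hle2 : I ≤ ((P.Ψ (e.1, e.2.1) : ℝ) : EReal) := iInf₂_le e her₀
    have heq : (e.1, e.2.1) = ((endpt w).1, (endpt w).2.1) := by rw [hw3]
    rw [heq] at hle2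
    have hlt2 : ((P.Ψ ((endpt w).1, (endpt w).2.1) : ℝ) : EReal) < ((cm : ℝ) : EReal) :=
      EReal.coe_lt_coe_iff.2 hΨlt
    have hlt3 : ((cm : ℝ) : EReal) < I := by
      rw [← hIcoe]
      exact_mod_cast hcI
    exact absurd ((hle2.trans_lt hlt2).trans hlt3) (lt_irrefl I)
  have h23 : Isolated zh ↔
      ∃ rh > (0 : ℝ), ∀ Φ : ℝ × Euc n → ℝ, Continuous Φ →
        ∀ r : ℝ, 0 < r → r ≤ rh →
          (⨅ e ∈ FeasReach zh r, ((Φ (e.1, e.2.1) : ℝ) : EReal)) = ⊤ := by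
    constructor
    · rintro ⟨r, hr, hempty⟩
      refine ⟨r, hr, fun Φ _hΦ r' _hr'0 hr'le => ?_⟩
      have hsub : FeasReach zh r' = ∅ :=
        Set.subset_empty_iff.1 (hempty ▸ FeasReach_mono zh hr'le)
      rw [hsub]
      simp
    · rintro ⟨rh, hrh, hall⟩
      refine ⟨rh, hrh, ?_⟩
      by_contra hne
      obtain ⟨e, he⟩ := Set.nonempty_iff_ne_empty.2 hne
      have h := hall (fun _ => 0) continuous_const rh hrh le_rfl
      have hle : (⨅ e ∈ FeasReach zh rh,
          (((fun _ : ℝ × Euc n => (0:ℝ)) (e.1, e.2.1) : ℝ) : EReal)) ≤ (((0:ℝ) : ℝ) : EReal) :=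
        iInf₂_le e he
      rw [h] at hle
      exact absurd hle (EReal.coe_lt_top 0).not_ge
  exact ⟨⟨h12, h21⟩, h23⟩
end
end
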